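/- arXiv:2203.04030 — 11 statements merged into one kernel-verified Lean document; each statement's English description precedes it below -/
import Mathlib

section
/- A correspondence R between nonempty sets X and Y is irreducible (i.e., minimal with respect to inclusion among correspondences between X and Y) if and only if for every pair (x,y) ∈ R one has min(#R(x), #R⁻¹(y)) = 1, where R(x) = {y ∈ Y : (x,y) ∈ R} and R⁻¹(y) = {x ∈ X : (x,y) ∈ R}. -/
/-- A correspondence between `X` and `Y` is a relation `R ⊆ X × Y` such that every
`x ∈ X` is related to some `y ∈ Y` and every `y ∈ Y` is related to some `x ∈ X`. -/
def IsCorrespondence {X Y : Type*} (R : Set (X × Y)) : Prop :=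
  (∀ x : X, ∃ y : Y, (x, y) ∈ R) ∧ (∀ y : Y, ∃ x : X, (x, y) ∈ R)

/-- A correspondence is irreducible if it is a minimal element of the set of all
correspondences between `X` and `Y` with respect to inclusion. -/
def IsIrreducibleCorrespondence {X Y : Type*} (R : Set (X × Y)) : Prop :=
  IsCorrespondence R ∧ ∀ R' : Set (X × Y), R' ⊆ R → IsCorrespondence R' → R' = R

lemma mk_eq_one_iff' {α : Type u} (s : Set α) :
    Cardinal.mk s = 1 ↔ s.Nonempty ∧ s.Subsingleton := by
  constructor
  · intro h
    constructor
    · rw [← Set.nonempty_coe_sort, ← Cardinal.mk_ne_zero_iff, h]; exact one_ne_zero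
    · rw [← Cardinal.mk_le_one_iff_set_subsingleton, h]
  · rintro ⟨hne, hs⟩
    exact le_antisymm (Cardinal.mk_le_one_iff_set_subsingleton.2 hs)
      (Cardinal.one_le_iff_ne_zero.2 (Cardinal.mk_ne_zero_iff.2 hne.to_subtype))

/-- A correspondence `R` between nonempty sets `X` and `Y` is irreducible if and only if
for every `(x,y) ∈ R` one has `min(#R(x), #R⁻¹(y)) = 1`, where `R(x) = {y | (x,y) ∈ R}`
and `R⁻¹(y) = {x | (x,y) ∈ R}`. -/
theorem isIrreducibleCorrespondence_iff {X Y : Type u} [Nonempty X] [Nonempty Y]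
    (R : Set (X × Y)) (hR : IsCorrespondence R) :
    IsIrreducibleCorrespondence R ↔
      ∀ p ∈ R, min (Cardinal.mk {y : Y | (p.1, y) ∈ R}) (Cardinal.mk {x : X | (x, p.2) ∈ R}) = 1 := by
  constructor
  · rintro ⟨-, hmin⟩ p hp
    by_contra hne
    -- both fibers nonempty
    have hy : (p.1, p.2) ∈ R := by simpa using hp
    have h1 : (1 : Cardinal) ≤ Cardinal.mk {y : Y | (p.1, y) ∈ R} :=
      Cardinal.one_le_iff_ne_zero.2 (Cardinal.mk_ne_zero_iff.2 ⟨⟨p.2, hy⟩⟩)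
    have h2 : (1 : Cardinal) ≤ Cardinal.mk {x : X | (x, p.2) ∈ R} :=
      Cardinal.one_le_iff_ne_zero.2 (Cardinal.mk_ne_zero_iff.2 ⟨⟨p.1, hy⟩⟩)
    have hgt : (1 : Cardinal) < min (Cardinal.mk {y : Y | (p.1, y) ∈ R})
        (Cardinal.mk {x : X | (x, p.2) ∈ R}) :=
      lt_of_le_of_ne (le_min h1 h2) (Ne.symm hne)
    have hns1 : ¬ ({y : Y | (p.1, y) ∈ R}).Subsingleton := by
      rw [← Cardinal.mk_le_one_iff_set_subsingleton]
      exact not_le.2 (lt_of_lt_of_le hgt (min_le_left _ _))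
    have hns2 : ¬ ({x : X | (x, p.2) ∈ R}).Subsingleton := by
      rw [← Cardinal.mk_le_one_iff_set_subsingleton]
      exact not_le.2 (lt_of_lt_of_le hgt (min_le_right _ _))
    rw [Set.not_subsingleton_iff] at hns1 hns2
    obtain ⟨y₁, hy₁, y₂, hy₂, hyne⟩ := hns1
    obtain ⟨x₁, hx₁, x₂, hx₂, hxne⟩ := hns2
    -- there is y' ≠ p.2 with (p.1, y') ∈ R, and x' ≠ p.1 with (x', p.2) ∈ R
    obtain ⟨y', hy', hy'ne⟩ : ∃ y', (p.1, y') ∈ R ∧ y' ≠ p.2 := by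
      by_cases h : y₁ = p.2
      · exact ⟨y₂, hy₂, by rintro rfl; exact hyne h⟩
      · exact ⟨y₁, hy₁, h⟩
    obtain ⟨x', hx', hx'ne⟩ : ∃ x', (x', p.2) ∈ R ∧ x' ≠ p.1 := by
      by_cases h : x₁ = p.1
      · exact ⟨x₂, hx₂, by rintro rfl; exact hxne h⟩
      · exact ⟨x₁, hx₁, h⟩
    have hcorr : IsCorrespondence (R \ {p}) := by
      constructor
      · intro x
        by_cases h : x = p.1
        · subst h
          exact ⟨y', hy', fun hmem => hy'ne (congrArg Prod.snd hmem)⟩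
        · obtain ⟨y, hyR⟩ := hR.1 x
          exact ⟨y, hyR, fun hmem => h (congrArg Prod.fst hmem)⟩
      · intro y
        by_cases h : y = p.2
        · subst h
          exact ⟨x', hx', fun hmem => hx'ne (congrArg Prod.fst hmem)⟩
        · obtain ⟨x, hxR⟩ := hR.2 y
          exact ⟨x, hxR, fun hmem => h (congrArg Prod.snd hmem)⟩
    have := hmin (R \ {p}) Set.diff_subset hcorr
    have hp' : p ∈ R \ {p} := by rw [this]; exact hp
    exact hp'.2 rfl
  · intro h
    refine ⟨hR, fun R' hsub hR' => ?_⟩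
    ext p
    refine ⟨fun hp => hsub hp, fun hp => ?_⟩
    have hmin := h p hp
    have : Cardinal.mk {y : Y | (p.1, y) ∈ R} = 1 ∨
        Cardinal.mk {x : X | (x, p.2) ∈ R} = 1 := by
      rcases min_cases (Cardinal.mk {y : Y | (p.1, y) ∈ R})
        (Cardinal.mk {x : X | (x, p.2) ∈ R}) with ⟨he, -⟩ | ⟨he, -⟩
      · left; rw [← he, hmin]
      · right; rw [← he, hmin]
    rcases this with h1 | h1
    · obtain ⟨-, hss⟩ := (mk_eq_one_iff' _).1 h1
      obtain ⟨y', hy'⟩ := hR'.1 p.1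
      have hy'R : y' ∈ {y : Y | (p.1, y) ∈ R} := hsub hy'
      have : y' = p.2 := hss hy'R (by simpa using hp)
      have := this ▸ hy'
      simpa using this
    · obtain ⟨-, hss⟩ := (mk_eq_one_iff' _).1 h1
      obtain ⟨x', hx'⟩ := hR'.2 p.2
      have hx'R : x' ∈ {x : X | (x, p.2) ∈ R} := hsub hx'
      have : x' = p.1 := hss hx'R (by simpa using hp)
      have := this ▸ hx'
      simpa using this
end

section
/- For arbitrary nonempty sets X and Y and every correspondence R between X and Y, there exists an irreducible correspondence R⁰ between X and Y with R⁰ ⊆ R. In particular, the set of irreducible correspondences between X and Y is nonempty. -/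
/-- For arbitrary nonempty sets `X` and `Y` and every correspondence `R` between `X` and
`Y`, there exists an irreducible correspondence `R⁰ ⊆ R`. In particular, irreducible
correspondences between `X` and `Y` exist. -/
theorem exists_irreducible_subcorrespondence {X Y : Type*} [Nonempty X] [Nonempty Y]
    (R : Set (X × Y)) (hR : IsCorrespondence R) :
    (∃ R0 : Set (X × Y), R0 ⊆ R ∧ IsIrreducibleCorrespondence R0) ∧
      ∃ R' : Set (X × Y), IsIrreducibleCorrespondence R' := by
  classical
  obtain ⟨h1, h2⟩ := hR
  choose f hf using h1
  choose g hg using h2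
  -- `Yc` : elements of `Y` not in the range of `f`
  set Yc : Set Y := (Set.range f)ᶜ with hYc
  -- a section of `f` on its range
  set s : Y → X := Function.invFun f with hs
  have hsf : ∀ y : Y, y ∈ Set.range f → f (s y) = y := by
    intro y hy
    exact Function.invFun_eq hy
  -- the candidate irreducible correspondence
  set R0 : Set (X × Y) :=
    {p | (p.2 = f p.1 ∧ p.1 ∉ g '' Yc)
      ∨ (p.2 = f p.1 ∧ p.1 = s p.2 ∧ ∀ x, f x = p.2 → x ∈ g '' Yc)
      ∨ (p.2 ∈ Yc ∧ p.1 = g p.2)} with hR0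
  have hsub : R0 ⊆ R := by
    rintro ⟨a, b⟩ hp
    simp only [hR0, Set.mem_setOf_eq, Prod.fst, Prod.snd] at hp
    rcases hp with ⟨hb, _⟩ | ⟨hb, _, _⟩ | ⟨_, ha⟩
    · simpa [hb] using hf a
    · simpa [hb] using hf a
    · simpa [ha] using hg b
  have hcorr : IsCorrespondence R0 := by
    constructor
    · intro x
      by_cases hx : x ∈ g '' Yc
      · obtain ⟨y, hy, hgy⟩ := hx
        exact ⟨y, Or.inr (Or.inr ⟨hy, hgy.symm⟩)⟩
      · exact ⟨f x, Or.inl ⟨rfl, hx⟩⟩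
    · intro y
      by_cases hy : y ∈ Set.range f
      · by_cases hall : ∀ x, f x = y → x ∈ g '' Yc
        · refine ⟨s y, Or.inr (Or.inl ⟨(hsf y hy).symm, rfl, ?_⟩)⟩
          intro x hx
          exact hall x hx
        · push_neg at hall
          obtain ⟨x, hxy, hxg⟩ := hall
          exact ⟨x, Or.inl ⟨hxy.symm, hxg⟩⟩
      · exact ⟨g y, Or.inr (Or.inr ⟨hy, rfl⟩)⟩
  have hirr : IsIrreducibleCorrespondence R0 := by
    refine ⟨hcorr, fun R' hR' hcorr' => ?_⟩
    refine Set.Subset.antisymm hR' ?_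
    rintro ⟨a, b⟩ hp
    simp only [hR0, Set.mem_setOf_eq, Prod.fst, Prod.snd] at hp
    rcases hp with ⟨hb, ha⟩ | ⟨hb, has, hall⟩ | ⟨hbYc, ha⟩
    · -- clause A: the only pair in R0 with first coordinate `a` is `(a, f a)`
      obtain ⟨y', hy'⟩ := hcorr'.1 a
      have hy'0 : (a, y') ∈ R0 := hR' hy'
      simp only [hR0, Set.mem_setOf_eq, Prod.fst, Prod.snd] at hy'0
      have : y' = b := by
        rcases hy'0 with ⟨h, _⟩ | ⟨h, _, _⟩ | ⟨hYc', hga⟩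
        · rw [h, hb]
        · rw [h, hb]
        · exact absurd (⟨y', hYc', hga.symm⟩ : a ∈ g '' Yc) ha
      rwa [this] at hy'
    · -- clause B: the only pair in R0 with second coordinate `b` is `(s b, b)`
      obtain ⟨x', hx'⟩ := hcorr'.2 b
      have hx'0 : (x', b) ∈ R0 := hR' hx'
      simp only [hR0, Set.mem_setOf_eq, Prod.fst, Prod.snd] at hx'0
      have hbr : b ∈ Set.range f := ⟨a, hb.symm⟩
      have : x' = a := by
        rcases hx'0 with ⟨h, hx'g⟩ | ⟨_, h, _⟩ | ⟨hbc, _⟩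
        · exact absurd (hall x' h.symm) hx'g
        · rw [h, has]
        · exact absurd hbr hbc
      rwa [this] at hx'
    · -- clause C: the only pair in R0 with second coordinate `b` is `(g b, b)`
      obtain ⟨x', hx'⟩ := hcorr'.2 b
      have hx'0 : (x', b) ∈ R0 := hR' hx'
      simp only [hR0, Set.mem_setOf_eq, Prod.fst, Prod.snd] at hx'0
      have : x' = a := by
        rcases hx'0 with ⟨h, _⟩ | ⟨h, _, _⟩ | ⟨_, hga⟩
        · exact absurd (⟨x', h.symm⟩ : b ∈ Set.range f) hbYc
        · exact absurd (⟨x', h.symm⟩ : b ∈ Set.range f) hbYc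
        · rw [hga, ha]
      rwa [this] at hx'
  exact ⟨⟨R0, hsub, hirr⟩, ⟨R0, hirr⟩⟩
end

section
/- For any two nonempty compact metric spaces X and Y, the Gromov–Hausdorff distance between X and Y equals one half of the infimum, over all irreducible correspondences R between X and Y, of the distortion of R. -/
open Set Metric GromovHausdorff

/-- The distortion of a relation `σ ⊆ X × Y` between metric spaces:
`dis σ = sup { |d(x,x') − d(y,y')| : (x,y), (x',y') ∈ σ }`. -/
noncomputable def distortion {X Y : Type*} [MetricSpace X] [MetricSpace Y]
    (σ : Set (X × Y)) : ℝ :=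
  sSup {r : ℝ | ∃ p ∈ σ, ∃ q ∈ σ, r = |dist p.1 q.1 - dist p.2 q.2|}

section AuxLemmas

/-- Every correspondence (between a nonempty `X` and some `Y`) contains a nonempty
irreducible correspondence. -/
lemma exists_irreducible_subset {X Y : Type*} [Nonempty X] {R : Set (X × Y)}
    (hR : IsCorrespondence R) :
    ∃ R' : Set (X × Y), R' ⊆ R ∧ R'.Nonempty ∧ IsIrreducibleCorrespondence R' := by
  classical
  obtain ⟨h1, h2⟩ := hR
  choose f hf using h1
  choose g hg using h2
  set T : Set X := g '' {y | y ∉ range f} with hT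
  set h : Y → X := fun y => if hy : ∃ x, f x = y then hy.choose else g y with hh'
  have hh : ∀ y, y ∈ range f → f (h y) = y := by
    intro y hy
    obtain ⟨x, hx⟩ := hy
    have hy' : ∃ x, f x = y := ⟨x, hx⟩
    simp only [hh', dif_pos hy']
    exact hy'.choose_spec
  set R' : Set (X × Y) := {p | (p.1 ∉ T ∧ p.2 = f p.1) ∨
      (p.2 ∈ range f ∧ f ⁻¹' {p.2} ⊆ T ∧ p.1 = h p.2) ∨
      (p.2 ∉ range f ∧ p.1 = g p.2)} with hR'
  have hsub : R' ⊆ R := by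
    rintro ⟨a, b⟩ (⟨-, hb⟩ | ⟨hb, -, ha⟩ | ⟨-, ha⟩)
    · simp only at hb; rw [hb]; exact hf a
    · simp only at ha hb
      have h2 : (a, b) = (h b, f (h b)) := by rw [hh b hb, ha]
      rw [h2]; exact hf _
    · simp only at ha; rw [ha]; exact hg b
  have hcorr : IsCorrespondence R' := by
    constructor
    · intro a
      by_cases ha : a ∈ T
      · obtain ⟨y, hy, rfl⟩ := ha
        exact ⟨y, Or.inr (Or.inr ⟨hy, rfl⟩)⟩
      · exact ⟨f a, Or.inl ⟨ha, rfl⟩⟩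
    · intro b
      by_cases hb : b ∈ range f
      · by_cases hbt : f ⁻¹' {b} ⊆ T
        · exact ⟨h b, Or.inr (Or.inl ⟨hb, hbt, rfl⟩)⟩
        · obtain ⟨x, hx1, hx2⟩ := not_subset.1 hbt
          exact ⟨x, Or.inl ⟨hx2, hx1.symm⟩⟩
      · exact ⟨g b, Or.inr (Or.inr ⟨hb, rfl⟩)⟩
  refine ⟨R', hsub, ?_, hcorr, ?_⟩
  · obtain ⟨y, hy⟩ := hcorr.1 (Classical.arbitrary X)
    exact ⟨_, hy⟩
  · intro R'' hsub'' hcorr''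
    apply Subset.antisymm hsub''
    rintro ⟨a, b⟩ hab
    rcases hab with ⟨haT, hb⟩ | ⟨hbf, hbT, ha⟩ | ⟨hbf, ha⟩
    · -- `a ∉ T`, `b = f a`
      simp only at haT hb
      obtain ⟨b', hb'⟩ := hcorr''.1 a
      have hbb : b' = f a := by
        rcases hsub'' hb' with ⟨-, h'⟩ | ⟨hb1, hb2, hb3⟩ | ⟨hb1, hb2⟩
        · exact h'
        · exfalso; apply haT
          apply hb2
          simp only [mem_preimage, mem_singleton_iff]
          simp only at hb3
          rw [hb3]; exact hh b' hb1
        · exfalso; apply haT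
          simp only at hb2
          rw [hb2]; exact ⟨b', hb1, rfl⟩
      rw [hb, ← hbb]; exact hb'
    · -- `b ∈ range f`, `f ⁻¹' {b} ⊆ T`, `a = h b`
      simp only at hbf hbT ha
      obtain ⟨a', ha'⟩ := hcorr''.2 b
      have haa : a' = h b := by
        rcases hsub'' ha' with ⟨ha1, ha2⟩ | ⟨-, -, ha3⟩ | ⟨hb1, -⟩
        · simp only at ha1 ha2
          exact absurd (hbT (by simp [ha2.symm])) ha1
        · exact ha3
        · exact absurd hbf hb1
      rw [ha, ← haa]; exact ha'
    · -- `b ∉ range f`, `a = g b`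
      simp only at hbf ha
      obtain ⟨a', ha'⟩ := hcorr''.2 b
      have haa : a' = g b := by
        rcases hsub'' ha' with ⟨-, ha2⟩ | ⟨hb1, -, -⟩ | ⟨-, ha3⟩
        · simp only at ha2
          exact absurd ⟨a', ha2.symm⟩ hbf
        · exact absurd hb1 hbf
        · exact ha3
      rw [ha, ← haa]; exact ha'

lemma distortionSet_bddAbove {X Y : Type*} [MetricSpace X] [MetricSpace Y] [CompactSpace X]
    [CompactSpace Y] (σ : Set (X × Y)) :
    BddAbove {r : ℝ | ∃ p ∈ σ, ∃ q ∈ σ, r = |dist p.1 q.1 - dist p.2 q.2|} := by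
  refine ⟨diam (univ : Set X) + diam (univ : Set Y), ?_⟩
  rintro r ⟨p, hp, q, hq, rfl⟩
  have h1 : dist p.1 q.1 ≤ diam (univ : Set X) :=
    dist_le_diam_of_mem isCompact_univ.isBounded (mem_univ _) (mem_univ _)
  have h2 : dist p.2 q.2 ≤ diam (univ : Set Y) :=
    dist_le_diam_of_mem isCompact_univ.isBounded (mem_univ _) (mem_univ _)
  have h3 : (0:ℝ) ≤ dist p.1 q.1 := dist_nonneg
  have h4 : (0:ℝ) ≤ dist p.2 q.2 := dist_nonneg
  rw [abs_sub_le_iff]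
  constructor <;> linarith

lemma pair_le_distortion {X Y : Type*} [MetricSpace X] [MetricSpace Y] [CompactSpace X]
    [CompactSpace Y] {σ : Set (X × Y)} {p q : X × Y} (hp : p ∈ σ) (hq : q ∈ σ) :
    |dist p.1 q.1 - dist p.2 q.2| ≤ distortion σ :=
  le_csSup (distortionSet_bddAbove σ) ⟨p, hp, q, hq, rfl⟩

lemma distortion_nonneg {X Y : Type*} [MetricSpace X] [MetricSpace Y] [CompactSpace X]
    [CompactSpace Y] {σ : Set (X × Y)} (h : σ.Nonempty) : 0 ≤ distortion σ := by
  obtain ⟨p, hp⟩ := h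
  have := pair_le_distortion hp hp
  simpa using this

lemma distortion_mono {X Y : Type*} [MetricSpace X] [MetricSpace Y] [CompactSpace X]
    [CompactSpace Y] {σ τ : Set (X × Y)} (hst : σ ⊆ τ) (hne : σ.Nonempty) :
    distortion σ ≤ distortion τ := by
  obtain ⟨p, hp⟩ := hne
  refine csSup_le ⟨_, ⟨p, hp, p, hp, rfl⟩⟩ ?_
  rintro r ⟨a, ha, b, hb, rfl⟩
  exact pair_le_distortion (hst ha) (hst hb)

variable {X Y : Type*} [MetricSpace X] [CompactSpace X] [Nonempty X]
  [MetricSpace Y] [CompactSpace Y] [Nonempty Y]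

/-- The Gromov–Hausdorff distance is at most half the distortion of any correspondence. -/
lemma ghDist_le_half_distortion {R : Set (X × Y)} (hR : IsCorrespondence R) :
    ghDist X Y ≤ distortion R / 2 := by
  have hne : R.Nonempty := by
    obtain ⟨y, hy⟩ := hR.1 (Classical.arbitrary X); exact ⟨_, hy⟩
  have hD0 : 0 ≤ distortion R := distortion_nonneg hne
  refine le_of_forall_pos_le_add fun δ δ0 => ?_
  set ε := distortion R / 2 + δ with hε
  have ε0 : 0 < ε := by positivity
  haveI : Nonempty R := hne.to_subtype
  have H : ∀ p q : R, |dist ((p : X × Y).1) ((q : X × Y).1)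
      - dist ((p : X × Y).2) ((q : X × Y).2)| ≤ 2 * ε := by
    intro p q
    have := pair_le_distortion p.2 q.2
    rw [hε]; linarith
  letI : MetricSpace (X ⊕ Y) :=
    glueMetricApprox (fun p : R => (p : X × Y).1) (fun p : R => (p : X × Y).2) ε ε0 H
  let Fl := @Sum.inl X Y
  let Fr := @Sum.inr X Y
  have Il : Isometry Fl := Isometry.of_dist_eq fun x y => rfl
  have Ir : Isometry Fr := Isometry.of_dist_eq fun x y => rfl
  have h1 : ghDist X Y ≤ hausdorffDist (range Fl) (range Fr) := ghDist_le_hausdorffDist Il Ir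
  have h2 : hausdorffDist (range Fl) (range Fr) ≤ ε := by
    refine hausdorffDist_le_of_mem_dist ε0.le ?_ ?_
    · rintro _ ⟨x, rfl⟩
      obtain ⟨y, hy⟩ := hR.1 x
      exact ⟨Fr y, mem_range_self _,
        le_of_eq (glueDist_glued_points (fun p : R => (p : X × Y).1)
          (fun p : R => (p : X × Y).2) ε ⟨(x, y), hy⟩)⟩
    · rintro _ ⟨y, rfl⟩
      obtain ⟨x, hx⟩ := hR.2 y
      refine ⟨Fl x, mem_range_self _, ?_⟩
      rw [dist_comm]
      exact le_of_eq (glueDist_glued_points (fun p : R => (p : X × Y).1)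
        (fun p : R => (p : X × Y).2) ε ⟨(x, y), hx⟩)
  linarith

/-- From the optimal coupling, one gets a correspondence of distortion at most twice the
Gromov–Hausdorff distance. -/
lemma exists_corr_distortion_le :
    ∃ R : Set (X × Y), IsCorrespondence R ∧ distortion R ≤ 2 * ghDist X Y := by
  set Φ := optimalGHInjl X Y
  set Ψ := optimalGHInjr X Y
  have hΦ : Isometry Φ := isometry_optimalGHInjl X Y
  have hΨ : Isometry Ψ := isometry_optimalGHInjr X Y
  have hH : hausdorffDist (range Φ) (range Ψ) = ghDist X Y := hausdorffDist_optimal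
  have hcl : IsCompact (range Φ) := isCompact_range hΦ.continuous
  have hcr : IsCompact (range Ψ) := isCompact_range hΨ.continuous
  have hne : EMetric.hausdorffEdist (range Φ) (range Ψ) ≠ ⊤ :=
    hausdorffEdist_ne_top_of_nonempty_of_bounded (range_nonempty _) (range_nonempty _)
      hcl.isBounded hcr.isBounded
  refine ⟨{p : X × Y | dist (Φ p.1) (Ψ p.2) ≤ ghDist X Y}, ⟨?_, ?_⟩, ?_⟩
  · intro x
    obtain ⟨z, hz, hdz⟩ := hcr.exists_infDist_eq_dist (range_nonempty _) (Φ x)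
    obtain ⟨y, rfl⟩ := hz
    refine ⟨y, ?_⟩
    have : infDist (Φ x) (range Ψ) ≤ hausdorffDist (range Φ) (range Ψ) :=
      infDist_le_hausdorffDist_of_mem (mem_range_self _) hne
    simp only [mem_setOf_eq]
    rw [← hdz]
    rwa [hH] at this
  · intro y
    obtain ⟨z, hz, hdz⟩ := hcl.exists_infDist_eq_dist (range_nonempty _) (Ψ y)
    obtain ⟨x, rfl⟩ := hz
    refine ⟨x, ?_⟩
    have : infDist (Ψ y) (range Φ) ≤ hausdorffDist (range Ψ) (range Φ) :=
      infDist_le_hausdorffDist_of_mem (mem_range_self _)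
        (by rwa [EMetric.hausdorffEdist_comm])
    simp only [mem_setOf_eq]
    rw [dist_comm (Φ x) (Ψ y), ← hdz]
    rwa [hausdorffDist_comm, hH] at this
  · have hgh0 : 0 ≤ ghDist X Y := by
      rw [← hH]; exact hausdorffDist_nonneg
    refine Real.sSup_le ?_ (by linarith)
    rintro r ⟨p, hp, q, hq, rfl⟩
    simp only [mem_setOf_eq] at hp hq
    have e1 : dist p.1 q.1 = dist (Φ p.1) (Φ q.1) := (hΦ.dist_eq _ _).symm
    have e2 : dist p.2 q.2 = dist (Ψ p.2) (Ψ q.2) := (hΨ.dist_eq _ _).symm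
    rw [e1, e2, ← Real.dist_eq]
    calc dist (dist (Φ p.1) (Φ q.1)) (dist (Ψ p.2) (Ψ q.2))
        ≤ dist (Φ p.1) (Ψ p.2) + dist (Φ q.1) (Ψ q.2) := dist_dist_dist_le _ _ _ _
      _ ≤ 2 * ghDist X Y := by linarith

end AuxLemmas

/-- For any two nonempty compact metric spaces `X` and `Y`, the Gromov–Hausdorff distance
between `X` and `Y` equals one half of the infimum, over all irreducible correspondences
`R` between `X` and `Y`, of the distortion of `R`. -/
theorem ghDist_eq_half_inf_distortion_irreducible_correspondences
    (X : Type*) (Y : Type*) [MetricSpace X] [CompactSpace X] [Nonempty X]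
    [MetricSpace Y] [CompactSpace Y] [Nonempty Y] :
    GromovHausdorff.ghDist X Y =
      (1 / 2) *
        sInf {d : ℝ | ∃ R : Set (X × Y), IsIrreducibleCorrespondence R ∧ d = distortion R} := by
  set S := {d : ℝ | ∃ R : Set (X × Y), IsIrreducibleCorrespondence R ∧ d = distortion R} with hS
  obtain ⟨R₀, hR₀, hdist₀⟩ := exists_corr_distortion_le (X := X) (Y := Y)
  obtain ⟨R₁, hsub, hne₁, hirr⟩ := exists_irreducible_subset hR₀
  have hmem : distortion R₁ ∈ S := ⟨R₁, hirr, rfl⟩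
  have hbdd : BddBelow S := by
    refine ⟨0, ?_⟩
    rintro d ⟨R, hR, rfl⟩
    have : R.Nonempty := by
      obtain ⟨y, hy⟩ := hR.1.1 (Classical.arbitrary X); exact ⟨_, hy⟩
    exact distortion_nonneg this
  have h1 : sInf S ≤ distortion R₁ := csInf_le hbdd hmem
  have h12 : distortion R₁ ≤ distortion R₀ := distortion_mono hsub hne₁
  have h2 : 2 * ghDist X Y ≤ sInf S := by
    refine le_csInf ⟨_, hmem⟩ ?_
    rintro d ⟨R, hR, rfl⟩
    have := ghDist_le_half_distortion hR.1
    linarith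
  linarith
end

section
/- For any nonempty sets X and Y and any irreducible correspondence R between X and Y, there exist unique partitions {X_i}_{i∈I} of X and {Y_i}_{i∈I} of Y such that R = ⋃_{i∈I} X_i × Y_i; moreover, these partitions are given by {R⁻¹(y) : y ∈ Y} and {R(x) : x ∈ X} respectively, and for each i ∈ I one has min(#X_i, #Y_i) = 1. Conversely, for any partitions {X_i}_{i∈I} of X and {Y_i}_{i∈I} of Y with min(#X_i, #Y_i) = 1 for each i, the set R = ⋃_{i∈I} X_i × Y_i is an irreducible correspondence between X and Y. -/
open Set

/-- A family `Q` of pairs `(X_i, Y_i)` of subsets such that `{X_i}` is a partition of `X`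
and `{Y_i}` is a partition of `Y` (the common index set being `Q` itself). -/
def IsPartitionPairing {X Y : Type*} (Q : Set (Set X × Set Y)) : Prop :=
  (∀ p ∈ Q, p.1.Nonempty ∧ p.2.Nonempty) ∧
    (∀ p ∈ Q, ∀ q ∈ Q, p ≠ q → Disjoint p.1 q.1 ∧ Disjoint p.2 q.2) ∧
    (⋃ p ∈ Q, p.1) = (univ : Set X) ∧ (⋃ p ∈ Q, p.2) = (univ : Set Y)

section Aux
variable {X Y : Type*} {R : Set (X × Y)}

lemma key_aux (h : IsIrreducibleCorrespondence R)
    {x : X} {y : Y} (hxy : (x, y) ∈ R) :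
    (∀ y', (x, y') ∈ R → y' = y) ∨ (∀ x', (x', y) ∈ R → x' = x) := by
  by_contra hc
  push_neg at hc
  obtain ⟨⟨y', hy', hy'ne⟩, ⟨x', hx', hx'ne⟩⟩ := hc
  have hcorr : IsCorrespondence (R \ {(x, y)}) := by
    constructor
    · intro a
      by_cases ha : a = x
      · exact ⟨y', by simp [ha, hy', Prod.ext_iff, hy'ne]⟩
      · obtain ⟨b, hb⟩ := h.1.1 a
        exact ⟨b, by simp [hb, Prod.ext_iff, ha]⟩
    · intro b
      by_cases hb : b = y
      · exact ⟨x', by simp [hb, hx', Prod.ext_iff, hx'ne]⟩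
      · obtain ⟨a, ha⟩ := h.1.2 b
        exact ⟨a, by simp [ha, Prod.ext_iff, hb]⟩
  have heq := h.2 _ diff_subset hcorr
  have : (x, y) ∈ R \ {(x, y)} := heq.symm ▸ hxy
  simp at this

/-- Lemma A: common preimage. -/
lemma preA (h : IsIrreducibleCorrespondence R) {x : X} {y y' : Y}
    (hxy : (x, y) ∈ R) (hxy' : (x, y') ∈ R) :
    {a : X | (a, y) ∈ R} = {a : X | (a, y') ∈ R} := by
  rcases eq_or_ne y y' with rfl | hne
  · rfl
  have h1 : {a : X | (a, y) ∈ R} = {x} := by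
    rcases key_aux h hxy with hl | hr
    · exact absurd (hl y' hxy') (Ne.symm hne)
    · apply Subset.antisymm
      · intro a ha; exact hr a ha
      · intro a ha; rcases ha with rfl; exact hxy
  have h2 : {a : X | (a, y') ∈ R} = {x} := by
    rcases key_aux h hxy' with hl | hr
    · exact absurd (hl y hxy) hne
    · apply Subset.antisymm
      · intro a ha; exact hr a ha
      · intro a ha; rcases ha with rfl; exact hxy'
  rw [h1, h2]

/-- Lemma B: common image. -/
lemma imgB (h : IsIrreducibleCorrespondence R) {x x' : X} {y : Y}
    (hxy : (x, y) ∈ R) (hx'y : (x', y) ∈ R) :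
    {b : Y | (x, b) ∈ R} = {b : Y | (x', b) ∈ R} := by
  rcases eq_or_ne x x' with rfl | hne
  · rfl
  have h1 : {b : Y | (x, b) ∈ R} = {y} := by
    rcases key_aux h hxy with hl | hr
    · apply Subset.antisymm
      · intro b hb; exact hl b hb
      · intro b hb; rcases hb with rfl; exact hxy
    · exact absurd (hr x' hx'y) (Ne.symm hne)
  have h2 : {b : Y | (x', b) ∈ R} = {y} := by
    rcases key_aux h hx'y with hl | hr
    · apply Subset.antisymm
      · intro b hb; exact hl b hb
      · intro b hb; rcases hb with rfl; exact hx'y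
    · exact absurd (hr x hxy) hne
  rw [h1, h2]

lemma block_sub (h : IsIrreducibleCorrespondence R) {a : X} {b : Y}
    (hab : (a, b) ∈ R) {x : X} {y : Y} (hx : (x, b) ∈ R) (hy : (a, y) ∈ R) :
    (x, y) ∈ R := by
  rcases key_aux h hab with hl | hr
  · rw [hl y hy]; exact hx
  · rw [hr x hx]; exact hy

/-- if two blocks share an x, they are equal -/
lemma blockEq1 (h : IsIrreducibleCorrespondence R) {z w : X × Y}
    (hz : z ∈ R) (hw : w ∈ R) {x : X} (h1 : (x, z.2) ∈ R) (h2 : (x, w.2) ∈ R) :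
    ({a : X | (a, z.2) ∈ R}, {b : Y | (z.1, b) ∈ R})
      = ({a : X | (a, w.2) ∈ R}, {b : Y | (w.1, b) ∈ R}) := by
  have hpre : {a : X | (a, z.2) ∈ R} = {a : X | (a, w.2) ∈ R} := preA h h1 h2
  have hz1w2 : (z.1, w.2) ∈ R := by
    have : z.1 ∈ {a : X | (a, w.2) ∈ R} := hpre ▸ (show z.1 ∈ {a : X | (a, z.2) ∈ R} from hz)
    exact this
  have himg : {b : Y | (z.1, b) ∈ R} = {b : Y | (w.1, b) ∈ R} := imgB h hz1w2 hw
  rw [Prod.ext_iff]; exact ⟨hpre, himg⟩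

/-- if two blocks share a y, they are equal -/
lemma blockEq2 (h : IsIrreducibleCorrespondence R) {z w : X × Y}
    (hz : z ∈ R) (hw : w ∈ R) {y : Y} (h1 : (z.1, y) ∈ R) (h2 : (w.1, y) ∈ R) :
    ({a : X | (a, z.2) ∈ R}, {b : Y | (z.1, b) ∈ R})
      = ({a : X | (a, w.2) ∈ R}, {b : Y | (w.1, b) ∈ R}) := by
  have himg : {b : Y | (z.1, b) ∈ R} = {b : Y | (w.1, b) ∈ R} := imgB h h1 h2
  have hw1z2 : (w.1, z.2) ∈ R := by
    have : z.2 ∈ {b : Y | (w.1, b) ∈ R} := himg ▸ (show z.2 ∈ {b : Y | (z.1, b) ∈ R} from hz)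
    exact this
  have hpre : {a : X | (a, z.2) ∈ R} = {a : X | (a, w.2) ∈ R} := preA h hw1z2 hw
  rw [Prod.ext_iff]; exact ⟨hpre, himg⟩

end Aux

section Main
variable {X Y : Type u} {R : Set (X × Y)}

def corrBlocks (R : Set (X × Y)) : Set (Set X × Set Y) :=
  {pq : Set X × Set Y | ∃ z ∈ R, pq = ({x : X | (x, z.2) ∈ R}, {y : Y | (z.1, y) ∈ R})}

lemma blocks_pp (hR : IsIrreducibleCorrespondence R) : IsPartitionPairing (corrBlocks R) := by
  refine ⟨?_, ?_, ?_, ?_⟩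
  · rintro p ⟨z, hz, rfl⟩
    exact ⟨⟨z.1, hz⟩, ⟨z.2, hz⟩⟩
  · rintro p ⟨z, hz, rfl⟩ q ⟨w, hw, rfl⟩ hne
    constructor
    · rw [Set.disjoint_left]
      intro x hx1 hx2
      exact hne (blockEq1 hR hz hw hx1 hx2)
    · rw [Set.disjoint_left]
      intro y hy1 hy2
      exact hne (blockEq2 hR hz hw hy1 hy2)
  · apply eq_univ_iff_forall.mpr
    intro x
    obtain ⟨y, hy⟩ := hR.1.1 x
    exact mem_biUnion ⟨(x, y), hy, rfl⟩ hy
  · apply eq_univ_iff_forall.mpr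
    intro y
    obtain ⟨x, hx⟩ := hR.1.2 y
    exact mem_biUnion ⟨(x, y), hx, rfl⟩ hx

lemma blocks_union (hR : IsIrreducibleCorrespondence R) :
    R = ⋃ p ∈ corrBlocks R, p.1 ×ˢ p.2 := by
  ext ⟨x, y⟩
  simp only [mem_iUnion, exists_prop, Set.mem_prod]
  constructor
  · intro hxy
    exact ⟨_, ⟨(x, y), hxy, rfl⟩, hxy, hxy⟩
  · rintro ⟨p, ⟨z, hz, rfl⟩, hx, hy⟩
    exact block_sub hR hz hx hy

lemma blocks_card (hR : IsIrreducibleCorrespondence R) :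
    ∀ p ∈ corrBlocks R, min (Cardinal.mk p.1) (Cardinal.mk p.2) = 1 := by
  rintro p ⟨z, hz, rfl⟩
  rcases key_aux hR (show (z.1, z.2) ∈ R from hz) with hl | hr
  · have h2 : {b : Y | (z.1, b) ∈ R} = {z.2} := by
      apply Subset.antisymm
      · intro b hb; exact hl b hb
      · intro b hb; rcases hb with rfl; exact hz
    have hmk : Cardinal.mk ↥{b : Y | (z.1, b) ∈ R} = 1 := by
      rw [h2]; exact Cardinal.mk_singleton _
    have h1le : (1 : Cardinal) ≤ Cardinal.mk ↥{x : X | (x, z.2) ∈ R} :=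
      Cardinal.one_le_iff_ne_zero.mpr (Cardinal.mk_ne_zero_iff.mpr ⟨z.1, hz⟩)
    rw [hmk]; exact min_eq_right h1le
  · have h1 : {a : X | (a, z.2) ∈ R} = {z.1} := by
      apply Subset.antisymm
      · intro a ha; exact hr a ha
      · intro a ha; rcases ha with rfl; exact hz
    have hmk : Cardinal.mk ↥{a : X | (a, z.2) ∈ R} = 1 := by
      rw [h1]; exact Cardinal.mk_singleton _
    have h1le : (1 : Cardinal) ≤ Cardinal.mk ↥{b : Y | (z.1, b) ∈ R} :=
      Cardinal.one_le_iff_ne_zero.mpr (Cardinal.mk_ne_zero_iff.mpr ⟨z.2, hz⟩)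
    rw [hmk]; exact min_eq_left h1le

lemma blocks_uniq (hR : IsIrreducibleCorrespondence R) (Q : Set (Set X × Set Y))
    (hQpp : IsPartitionPairing Q) (hQun : R = ⋃ p ∈ Q, p.1 ×ˢ p.2) :
    Q = corrBlocks R := by
  have hmem : ∀ x y, (x, y) ∈ R ↔ ∃ p ∈ Q, x ∈ p.1 ∧ y ∈ p.2 := by
    intro x y
    rw [hQun]
    simp only [mem_iUnion, exists_prop, Set.mem_prod]
  have hclaim : ∀ q ∈ Q, ∀ x ∈ q.1, ∀ y ∈ q.2,
      q = ({a : X | (a, y) ∈ R}, {b : Y | (x, b) ∈ R}) := by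
    intro q hq x hx y hy
    have h1 : q.1 = {a : X | (a, y) ∈ R} := by
      apply Subset.antisymm
      · intro a ha; exact (hmem a y).mpr ⟨q, hq, ha, hy⟩
      · intro a ha
        obtain ⟨q', hq', ha', hy'⟩ := (hmem a y).mp ha
        rcases eq_or_ne q' q with rfl | hne
        · exact ha'
        · exact absurd hy' (Set.disjoint_left.mp (hQpp.2.1 q hq q' hq' hne.symm).2 hy)
    have h2 : q.2 = {b : Y | (x, b) ∈ R} := by
      apply Subset.antisymm
      · intro b hb; exact (hmem x b).mpr ⟨q, hq, hx, hb⟩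
      · intro b hb
        obtain ⟨q', hq', hx', hb'⟩ := (hmem x b).mp hb
        rcases eq_or_ne q' q with rfl | hne
        · exact hb'
        · exact absurd hx' (Set.disjoint_left.mp (hQpp.2.1 q hq q' hq' hne.symm).1 hx)
    rw [Prod.ext_iff]; exact ⟨h1, h2⟩
  ext p
  constructor
  · intro hp
    obtain ⟨⟨x, hx⟩, ⟨y, hy⟩⟩ := hQpp.1 p hp
    exact ⟨(x, y), (hmem x y).mpr ⟨p, hp, hx, hy⟩, hclaim p hp x hx y hy⟩
  · rintro ⟨z, hz, rfl⟩
    obtain ⟨q, hq, hx, hy⟩ := (hmem z.1 z.2).mp hz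
    have := hclaim q hq z.1 hx z.2 hy
    rw [← this]
    exact hq

lemma converse_part (Q : Set (Set X × Set Y)) (hQpp : IsPartitionPairing Q)
    (hcard : ∀ p ∈ Q, min (Cardinal.mk p.1) (Cardinal.mk p.2) = 1) :
    IsIrreducibleCorrespondence (⋃ p ∈ Q, p.1 ×ˢ p.2) := by
  set R := ⋃ p ∈ Q, p.1 ×ˢ p.2 with hRdef
  have hmem : ∀ x y, (x, y) ∈ R ↔ ∃ p ∈ Q, x ∈ p.1 ∧ y ∈ p.2 := by
    intro x y
    rw [hRdef]
    simp only [mem_iUnion, exists_prop, Set.mem_prod]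
  have hcorr : IsCorrespondence R := by
    constructor
    · intro x
      have hx : x ∈ ⋃ p ∈ Q, p.1 := hQpp.2.2.1 ▸ mem_univ x
      rw [mem_iUnion₂] at hx
      obtain ⟨p, hp, hxp⟩ := hx
      obtain ⟨y, hy⟩ := (hQpp.1 p hp).2
      exact ⟨y, (hmem x y).mpr ⟨p, hp, hxp, hy⟩⟩
    · intro y
      have hy : y ∈ ⋃ p ∈ Q, p.2 := hQpp.2.2.2 ▸ mem_univ y
      rw [mem_iUnion₂] at hy
      obtain ⟨p, hp, hyp⟩ := hy
      obtain ⟨x, hx⟩ := (hQpp.1 p hp).1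
      exact ⟨x, (hmem x y).mpr ⟨p, hp, hx, hyp⟩⟩
  refine ⟨hcorr, ?_⟩
  intro R' hsub hR'
  apply Subset.antisymm hsub
  rintro ⟨x, y⟩ hxy
  obtain ⟨p, hp, hx, hy⟩ := (hmem x y).mp hxy
  have hm := hcard p hp
  have hcase : Cardinal.mk ↥p.1 = 1 ∨ Cardinal.mk ↥p.2 = 1 := by
    rcases min_cases (Cardinal.mk ↥p.1) (Cardinal.mk ↥p.2) with ⟨h, _⟩ | ⟨h, _⟩
    · left; rw [← h]; exact hm
    · right; rw [← h]; exact hm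
  rcases hcase with h1 | h2
  · have hss : p.1.Subsingleton := Cardinal.mk_le_one_iff_set_subsingleton.mp h1.le
    obtain ⟨x', hx'⟩ := hR'.2 y
    obtain ⟨q, hq, hx'q, hyq⟩ := (hmem x' y).mp (hsub hx')
    have hqp : q = p := by
      by_contra hne
      exact absurd hyq (Set.disjoint_left.mp (hQpp.2.1 p hp q hq (Ne.symm hne)).2 hy)
    have hxx : x' = x := hss (hqp ▸ hx'q) hx
    rwa [← hxx]
  · have hss : p.2.Subsingleton := Cardinal.mk_le_one_iff_set_subsingleton.mp h2.le
    obtain ⟨y', hy'⟩ := hR'.1 x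
    obtain ⟨q, hq, hxq, hy'q⟩ := (hmem x y').mp (hsub hy')
    have hqp : q = p := by
      by_contra hne
      exact absurd hxq (Set.disjoint_left.mp (hQpp.2.1 p hp q hq (Ne.symm hne)).1 hx)
    have hyy : y' = y := hss (hqp ▸ hy'q) hy
    rwa [← hyy]

end Main


/-- For any nonempty sets `X`, `Y` and any irreducible correspondence `R` between them,
there exist unique partitions `{X_i}` of `X` and `{Y_i}` of `Y` (paired via a common index
set) with `R = ⋃ᵢ X_i × Y_i`; these partitions are given by the preimages `R⁻¹(y)` and the
images `R(x)`, and each pair satisfies `min(#X_i, #Y_i) = 1`. Conversely, any such union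
over paired partitions with `min(#X_i, #Y_i) = 1` is an irreducible correspondence. -/
theorem irreducibleCorrespondence_decomposition {X Y : Type u} [Nonempty X] [Nonempty Y] :
    (∀ R : Set (X × Y), IsIrreducibleCorrespondence R →
      (∃! Q : Set (Set X × Set Y),
          IsPartitionPairing Q ∧ R = ⋃ p ∈ Q, p.1 ×ˢ p.2) ∧
        (IsPartitionPairing {pq : Set X × Set Y |
            ∃ z ∈ R, pq = ({x : X | (x, z.2) ∈ R}, {y : Y | (z.1, y) ∈ R})} ∧
          R = ⋃ p ∈ {pq : Set X × Set Y |
            ∃ z ∈ R, pq = ({x : X | (x, z.2) ∈ R}, {y : Y | (z.1, y) ∈ R})}, p.1 ×ˢ p.2 ∧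
          ∀ p ∈ {pq : Set X × Set Y |
            ∃ z ∈ R, pq = ({x : X | (x, z.2) ∈ R}, {y : Y | (z.1, y) ∈ R})},
            min (Cardinal.mk p.1) (Cardinal.mk p.2) = 1)) ∧
    (∀ Q : Set (Set X × Set Y), IsPartitionPairing Q →
      (∀ p ∈ Q, min (Cardinal.mk p.1) (Cardinal.mk p.2) = 1) →
      IsIrreducibleCorrespondence (⋃ p ∈ Q, p.1 ×ˢ p.2)) := by
  constructor
  · intro R hR
    refine ⟨⟨corrBlocks R, ⟨blocks_pp hR, blocks_union hR⟩, ?_⟩,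
      blocks_pp hR, blocks_union hR, blocks_card hR⟩
    rintro Q ⟨hQpp, hQun⟩
    exact blocks_uniq hR Q hQpp hQun
  · exact fun Q hQpp hcard => converse_part Q hQpp hcard
end

section
/- Let X and Y be metric spaces, let D_X = {X_i}_{i∈I} and D_Y = {Y_i}_{i∈I} be partitions of X and Y respectively over a common index set I with #I ≥ 2, and let R = ⋃_{i∈I} X_i × Y_i be the corresponding correspondence. Then dis R = sup{ |X_iX_j|' − |Y_iY_j|, |Y_iY_j|' − |X_iX_j| : i, j ∈ I } = sup{ diam D_X, diam D_Y, |X_iX_j|' − |Y_iY_j|, |Y_iY_j|' − |X_iX_j| : i, j ∈ I, i ≠ j }. -/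
open Set ENNReal

private lemma edist_dist_dist {X Y : Type*} [MetricSpace X] [MetricSpace Y]
    (x x' : X) (y y' : Y) :
    edist (dist x x') (dist y y') =
      max (edist x x' - edist y y') (edist y y' - edist x x') := by
  have hmono : Monotone ENNReal.ofReal := fun _ _ h => ENNReal.ofReal_le_ofReal h
  rw [edist_dist, Real.dist_eq, edist_dist, edist_dist, abs_eq_max_neg, neg_sub,
    hmono.map_max, ENNReal.ofReal_sub _ dist_nonneg, ENNReal.ofReal_sub _ dist_nonneg]

private lemma diag_split {I : Type*} (f : I → I → ℝ≥0∞) :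
    ⨆ i, ⨆ j, f i j = (⨆ i, f i i) ⊔ ⨆ i, ⨆ j, ⨆ _ : i ≠ j, f i j := by
  apply le_antisymm
  · refine iSup_le fun i => iSup_le fun j => ?_
    by_cases h : i = j
    · subst h; exact le_sup_of_le_left (le_iSup (fun i => f i i) i)
    · exact le_sup_of_le_right
        (le_iSup_of_le i (le_iSup_of_le j (le_iSup_of_le h le_rfl)))
  · refine sup_le (iSup_le fun i => le_iSup_of_le i (le_iSup (f i) i))
      (iSup_le fun i => iSup_le fun j => iSup_le fun _ =>
        le_iSup_of_le i (le_iSup (f i) j))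

private lemma comm4 {A B C D : Type*} (f : A → B → C → D → ℝ≥0∞) :
    (⨆ a, ⨆ b, ⨆ c, ⨆ d, f a b c d) = ⨆ c, ⨆ d, ⨆ a, ⨆ b, f a b c d := by
  apply le_antisymm <;>
    exact iSup_le fun a => iSup_le fun b => iSup_le fun c => iSup_le fun d =>
      le_iSup_of_le c (le_iSup_of_le d (le_iSup_of_le a (le_iSup_of_le b le_rfl)))


/-- The distortion (with values in `[0,∞]`) of a relation `σ ⊆ X × Y` between metric
spaces: `dis σ = sup { |d(x,x') − d(y,y')| : (x,y), (x',y') ∈ σ }`. -/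
noncomputable def edistortion {X Y : Type*} [MetricSpace X] [MetricSpace Y]
    (σ : Set (X × Y)) : ℝ≥0∞ :=
  ⨆ p ∈ σ, ⨆ q ∈ σ, edist (dist p.1 q.1) (dist p.2 q.2)

/-- `|AB| = inf { d(a,b) : a ∈ A, b ∈ B }`, with values in `[0,∞]`. -/
noncomputable def setInfDist {X : Type*} [MetricSpace X] (A B : Set X) : ℝ≥0∞ :=
  ⨅ a ∈ A, ⨅ b ∈ B, edist a b

/-- `|AB|' = sup { d(a,b) : a ∈ A, b ∈ B }`, with values in `[0,∞]`. -/
noncomputable def setSupDist {X : Type*} [MetricSpace X] (A B : Set X) : ℝ≥0∞ :=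
  ⨆ a ∈ A, ⨆ b ∈ B, edist a b

private lemma setInfDist_self {X : Type*} [MetricSpace X] {A : Set X} (hA : A.Nonempty) :
    setInfDist A A = 0 := by
  obtain ⟨a, ha⟩ := hA
  refine le_antisymm ?_ zero_le
  calc setInfDist A A ≤ edist a a :=
        iInf₂_le_of_le a ha (iInf₂_le_of_le a ha le_rfl)
    _ = 0 := edist_self a

private lemma setSupDist_self {X : Type*} [MetricSpace X] (A : Set X) :
    setSupDist A A = EMetric.diam A := rfl

private lemma setSupDist_sub_setInfDist {X Y : Type*} [MetricSpace X] [MetricSpace Y]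
    (A B : Set X) (C D : Set Y) :
    setSupDist A B - setInfDist C D =
      ⨆ a : A, ⨆ b : B, ⨆ c : C, ⨆ d : D, (edist a.1 b.1 - edist c.1 d.1) := by
  rw [setSupDist, setInfDist]
  rw [← iSup_subtype'' A fun a => ⨆ b ∈ B, edist a b,
      ← iInf_subtype'' C fun c => ⨅ d ∈ D, edist c d]
  rw [ENNReal.iSup_sub]
  refine iSup_congr fun a => ?_
  rw [← iSup_subtype'' B fun b => edist a.1 b, ENNReal.iSup_sub]
  refine iSup_congr fun b => ?_
  rw [ENNReal.sub_iInf]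
  refine iSup_congr fun c => ?_
  rw [← iInf_subtype'' D fun d => edist c.1 d, ENNReal.sub_iInf]


/-- Let `D_X = {X_i}` and `D_Y = {Y_i}` be partitions of metric spaces `X` and `Y` over a
common index set `I` with `#I ≥ 2`, and let `R = ⋃ᵢ X_i × Y_i`. Then
`dis R = sup_{i,j} { |X_iX_j|' − |Y_iY_j|, |Y_iY_j|' − |X_iX_j| }`
`      = max( diam D_X, diam D_Y, sup_{i≠j} { |X_iX_j|' − |Y_iY_j|, |Y_iY_j|' − |X_iX_j| } )`. -/
theorem edistortion_of_paired_partitions {X Y I : Type*} [MetricSpace X] [MetricSpace Y]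
    [Nontrivial I]
    (P : I → Set X) (Q : I → Set Y)
    (hPne : ∀ i, (P i).Nonempty) (hQne : ∀ i, (Q i).Nonempty)
    (hPdisj : Pairwise (Function.onFun Disjoint P))
    (hQdisj : Pairwise (Function.onFun Disjoint Q))
    (hPcov : (⋃ i, P i) = (univ : Set X)) (hQcov : (⋃ i, Q i) = (univ : Set Y)) :
    edistortion (⋃ i, P i ×ˢ Q i) =
        (⨆ i, ⨆ j, max (setSupDist (P i) (P j) - setInfDist (Q i) (Q j))
          (setSupDist (Q i) (Q j) - setInfDist (P i) (P j))) ∧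
      edistortion (⋃ i, P i ×ˢ Q i) =
        max (⨆ i, EMetric.diam (P i)) (max (⨆ i, EMetric.diam (Q i))
          (⨆ i, ⨆ j, ⨆ _ : i ≠ j, max (setSupDist (P i) (P j) - setInfDist (Q i) (Q j))
            (setSupDist (Q i) (Q j) - setInfDist (P i) (P j)))) := by
  set T : I → I → ℝ≥0∞ := fun i j =>
    max (setSupDist (P i) (P j) - setInfDist (Q i) (Q j))
      (setSupDist (Q i) (Q j) - setInfDist (P i) (P j)) with hT
  have hTform : ∀ i j, T i j =
      ⨆ x : P i, ⨆ x' : P j, ⨆ y : Q i, ⨆ y' : Q j,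
        max (edist x.1 x'.1 - edist y.1 y'.1) (edist y.1 y'.1 - edist x.1 x'.1) := by
    intro i j
    rw [hT]
    simp only [iSup_sup_eq]
    rw [setSupDist_sub_setInfDist, setSupDist_sub_setInfDist,
      comm4 fun (y : Q i) (y' : Q j) (x : P i) (x' : P j) => edist y.1 y'.1 - edist x.1 x'.1]
  have hmain : edistortion (⋃ i, P i ×ˢ Q i) = ⨆ i, ⨆ j, T i j := by
    rw [edistortion]
    apply le_antisymm
    · refine iSup₂_le fun p hp => iSup₂_le fun q hq => ?_
      rw [mem_iUnion] at hp hq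
      obtain ⟨i, hpi⟩ := hp
      obtain ⟨j, hqj⟩ := hq
      rw [mem_prod] at hpi hqj
      rw [edist_dist_dist]
      refine le_iSup_of_le i (le_iSup_of_le j ?_)
      rw [hTform]
      exact le_iSup_of_le ⟨p.1, hpi.1⟩ (le_iSup_of_le ⟨q.1, hqj.1⟩
        (le_iSup_of_le ⟨p.2, hpi.2⟩ (le_iSup_of_le ⟨q.2, hqj.2⟩ le_rfl)))
    · refine iSup_le fun i => iSup_le fun j => ?_
      rw [hTform]
      refine iSup_le fun x => iSup_le fun x' => iSup_le fun y => iSup_le fun y' => ?_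
      rw [← edist_dist_dist]
      exact le_iSup₂_of_le (x.1, y.1) (mem_iUnion.2 ⟨i, mem_prod.2 ⟨x.2, y.2⟩⟩)
        (le_iSup₂_of_le (x'.1, y'.1) (mem_iUnion.2 ⟨j, mem_prod.2 ⟨x'.2, y'.2⟩⟩) le_rfl)
  have hdiag : ∀ i, T i i = EMetric.diam (P i) ⊔ EMetric.diam (Q i) := by
    intro i
    simp only [hT]
    rw [setInfDist_self (hQne i), setInfDist_self (hPne i), tsub_zero, tsub_zero,
      setSupDist_self, setSupDist_self]
  refine ⟨hmain, ?_⟩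
  rw [hmain, diag_split T]
  have : (⨆ i, T i i) = (⨆ i, EMetric.diam (P i)) ⊔ ⨆ i, EMetric.diam (Q i) := by
    rw [← iSup_sup_eq]
    exact iSup_congr hdiag
  rw [this, sup_assoc]
end

section
/- For any nonempty compact metric space X and any real numbers λ ≥ 0 and μ ≥ 0, the Gromov–Hausdorff distance between the rescaled spaces λX and μX equals (1/2)·|λ − μ|·diam X. -/
open Metric Set

/-- `A` is a copy of the metric space `X` with all distances multiplied by `lam`:
for `lam > 0` there is a bijection `A ≃ X` scaling distances by `lam`; for `lam = 0`
the space `λX` is by definition the one-point space. -/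
def IsScaledCopy (lam : ℝ) (X : Type*) (A : Type*) [MetricSpace X] [MetricSpace A] : Prop :=
  (0 < lam ∧ ∃ f : A ≃ X, ∀ a b : A, dist a b = lam * dist (f a) (f b)) ∨
    (lam = 0 ∧ Nonempty A ∧ Subsingleton A)

lemma diam_le_two_hausdorffDist_add {α : Type*} [MetricSpace α] {s t : Set α}
    (hbt : Bornology.IsBounded t)
    (hne : EMetric.hausdorffEdist s t ≠ ⊤) :
    diam s ≤ 2 * hausdorffDist s t + diam t := by
  refine Metric.diam_le_of_forall_dist_le
    (by have := Metric.hausdorffDist_nonneg (s := s) (t := t)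
        have := Metric.diam_nonneg (s := t); linarith)
    fun x hx y hy => ?_
  refine le_of_forall_pos_le_add fun ε hε => ?_
  obtain ⟨x', hx't, hxx'⟩ := Metric.exists_dist_lt_of_hausdorffDist_lt hx
    (lt_add_of_pos_right _ (half_pos hε)) hne
  obtain ⟨y', hy't, hyy'⟩ := Metric.exists_dist_lt_of_hausdorffDist_lt hy
    (lt_add_of_pos_right _ (half_pos hε)) hne
  have h1 : dist x' y' ≤ diam t := Metric.dist_le_diam_of_mem hbt hx't hy't
  have h2 : dist y' y = dist y y' := dist_comm _ _
  calc dist x y ≤ dist x x' + dist x' y' + dist y' y := dist_triangle4 x x' y' y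
    _ ≤ (hausdorffDist s t + ε / 2) + diam t + (hausdorffDist s t + ε / 2) := by
        rw [h2]; linarith
    _ = 2 * hausdorffDist s t + diam t + ε := by ring

lemma diam_of_scaled_copy {lam : ℝ} {X A : Type*} [MetricSpace X] [MetricSpace A]
    [CompactSpace X] [CompactSpace A]
    (hA : IsScaledCopy lam X A) (hlam : 0 ≤ lam) :
    diam (univ : Set A) = lam * diam (univ : Set X) := by
  rcases hA with ⟨hpos, f, hf⟩ | ⟨h0, _, hsub⟩
  · apply le_antisymm
    · refine Metric.diam_le_of_forall_dist_le
        (mul_nonneg hlam Metric.diam_nonneg) fun a _ b _ => ?_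
      rw [hf a b]
      exact mul_le_mul_of_nonneg_left
        (Metric.dist_le_diam_of_mem isBounded_of_compactSpace (mem_univ _) (mem_univ _)) hlam
    · rw [← le_div_iff₀' hpos]
      refine Metric.diam_le_of_forall_dist_le
        (div_nonneg Metric.diam_nonneg (le_of_lt hpos)) fun x _ y _ => ?_
      have h := hf (f.symm x) (f.symm y)
      simp only [Equiv.apply_symm_apply] at h
      rw [le_div_iff₀' hpos, ← h]
      exact Metric.dist_le_diam_of_mem isBounded_of_compactSpace (mem_univ _) (mem_univ _)
  · subst h0
    rw [zero_mul]
    exact Metric.diam_subsingleton fun x _ y _ => Subsingleton.elim x y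

lemma ghDist_le_half_diam_of_subsingleton
    {A B : Type*} [MetricSpace A] [CompactSpace A] [Nonempty A]
    [MetricSpace B] [CompactSpace B] [Nonempty B] (hsub : Subsingleton A) :
    GromovHausdorff.ghDist B A ≤ diam (univ : Set B) / 2 := by
  obtain ⟨a₀⟩ := (inferInstance : Nonempty A)
  have key : GromovHausdorff.ghDist B A ≤ 0 + diam (univ : Set B) / 2 + 0 := by
    have := GromovHausdorff.ghDist_le_of_approx_subsets
      (s := (univ : Set B)) (Φ := fun _ => a₀)
      (ε₁ := 0) (ε₂ := diam (univ : Set B)) (ε₃ := 0)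
      (fun x => ⟨x, mem_univ x, by simp⟩)
      (fun x => ⟨⟨Classical.arbitrary B, mem_univ _⟩, by simp [Subsingleton.elim x a₀]⟩)
      (fun x y => by
        simp only [dist_self, sub_zero]
        rw [abs_of_nonneg dist_nonneg, Subtype.dist_eq]
        exact Metric.dist_le_diam_of_mem isBounded_of_compactSpace (mem_univ _) (mem_univ _))
    exact this
  linarith

/-- For any nonempty compact metric space `X` and reals `λ, μ ≥ 0`,
`d_GH(λX, μX) = (1/2)·|λ − μ|·diam X`. -/
theorem ghDist_scaled_copies_of_same_space
    (X : Type*) [MetricSpace X] [CompactSpace X] [Nonempty X]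
    (lam mu : ℝ) (hlam : 0 ≤ lam) (hmu : 0 ≤ mu)
    (A : Type*) [MetricSpace A] [CompactSpace A] [Nonempty A]
    (B : Type*) [MetricSpace B] [CompactSpace B] [Nonempty B]
    (hA : IsScaledCopy lam X A) (hB : IsScaledCopy mu X B) :
    GromovHausdorff.ghDist A B = 1 / 2 * |lam - mu| * Metric.diam (Set.univ : Set X) := by
  have dA : diam (univ : Set A) = lam * diam (univ : Set X) := diam_of_scaled_copy hA hlam
  have dB : diam (univ : Set B) = mu * diam (univ : Set X) := diam_of_scaled_copy hB hmu
  have hdX : 0 ≤ diam (univ : Set X) := Metric.diam_nonneg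
  -- lower bound
  have lower : |lam - mu| * diam (univ : Set X) ≤ 2 * GromovHausdorff.ghDist A B := by
    obtain ⟨Φ, Ψ, hΦ, hΨ, hD⟩ := GromovHausdorff.ghDist_eq_hausdorffDist A B
    have hbΦ := (isCompact_range hΦ.continuous).isBounded
    have hbΨ := (isCompact_range hΨ.continuous).isBounded
    have hne : EMetric.hausdorffEdist (range Φ) (range Ψ) ≠ ⊤ :=
      Metric.hausdorffEdist_ne_top_of_nonempty_of_bounded
        (range_nonempty Φ) (range_nonempty Ψ) hbΦ hbΨ
    have hne' : EMetric.hausdorffEdist (range Ψ) (range Φ) ≠ ⊤ := by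
      show Metric.hausdorffEDist _ _ ≠ ⊤
      rw [Metric.hausdorffEDist_comm]; exact hne
    have h1 : diam (univ : Set A) ≤ 2 * GromovHausdorff.ghDist A B + diam (univ : Set B) := by
      have := diam_le_two_hausdorffDist_add (s := range Φ) (t := range Ψ) hbΨ hne
      rwa [hΦ.diam_range, hΨ.diam_range, ← hD] at this
    have h2 : diam (univ : Set B) ≤ 2 * GromovHausdorff.ghDist A B + diam (univ : Set A) := by
      have := diam_le_two_hausdorffDist_add (s := range Ψ) (t := range Φ) hbΦ hne'
      rwa [hΦ.diam_range, hΨ.diam_range, Metric.hausdorffDist_comm, ← hD] at this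
    have habs : |lam - mu| * diam (univ : Set X)
        = |diam (univ : Set A) - diam (univ : Set B)| := by
      rw [dA, dB, ← sub_mul, abs_mul, abs_of_nonneg hdX]
    rw [habs]
    rw [abs_sub_le_iff]
    constructor <;> linarith
  -- upper bound
  have upper : GromovHausdorff.ghDist A B ≤ 1 / 2 * |lam - mu| * diam (univ : Set X) := by
    rcases hA with ⟨hlp, fA, hfA⟩ | ⟨hl0, _, hsubA⟩
    · rcases hB with ⟨hmp, fB, hfB⟩ | ⟨hm0, _, hsubB⟩
      · have key := GromovHausdorff.ghDist_le_of_approx_subsets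
          (s := (univ : Set A)) (Φ := fun a => fB.symm (fA a))
          (ε₁ := 0) (ε₂ := |lam - mu| * diam (univ : Set X)) (ε₃ := 0)
          (fun x => ⟨x, mem_univ x, by simp⟩)
          (fun x => ⟨⟨fA.symm (fB x), mem_univ _⟩, by simp⟩)
          (fun x y => by
            rw [Subtype.dist_eq, hfA, hfB]
            simp only [Equiv.apply_symm_apply]
            rw [← sub_mul, abs_mul, abs_of_nonneg (dist_nonneg)]
            exact mul_le_mul_of_nonneg_left
              (Metric.dist_le_diam_of_mem isBounded_of_compactSpace (mem_univ _) (mem_univ _))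
              (abs_nonneg _))
        calc GromovHausdorff.ghDist A B ≤ 0 + |lam - mu| * diam (univ : Set X) / 2 + 0 := key
          _ = 1 / 2 * |lam - mu| * diam (univ : Set X) := by ring
      · -- mu = 0, B subsingleton
        have := ghDist_le_half_diam_of_subsingleton (A := B) (B := A) hsubB
        rw [dA] at this
        subst hm0
        calc GromovHausdorff.ghDist A B ≤ lam * diam (univ : Set X) / 2 := this
          _ = 1 / 2 * |lam - 0| * diam (univ : Set X) := by
              rw [sub_zero, abs_of_nonneg hlam]; ring
    · -- lam = 0, A subsingleton
      have h := ghDist_le_half_diam_of_subsingleton (A := A) (B := B) hsubA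
      have hcomm : GromovHausdorff.ghDist A B = GromovHausdorff.ghDist B A := by
        unfold GromovHausdorff.ghDist; exact dist_comm _ _
      rw [dB] at h
      subst hl0
      calc GromovHausdorff.ghDist A B = GromovHausdorff.ghDist B A := hcomm
        _ ≤ mu * diam (univ : Set X) / 2 := h
        _ = 1 / 2 * |0 - mu| * diam (univ : Set X) := by
            rw [zero_sub, abs_neg, abs_of_nonneg hmu]; ring
  linarith
end

section
/- Let X and Y be nonempty compact metric spaces such that the cardinality of X is strictly less than the Borsuk number of Y and diam X ≤ diam Y. Then 2·d_GH(X, Y) = diam Y. -/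
open Set

/-- The Borsuk number of a metric space `Y`: the infimum of cardinal numbers `n` such that
`Y` can be partitioned into `n` nonempty subsets of strictly smaller diameter (a partition
`{Y_i}` with `diam Y_i ≤ diam Y − ε` for all `i`, for some `ε > 0`). -/
noncomputable def borsukNumber (Y : Type u) [MetricSpace Y] : Cardinal.{u} :=
  sInf {n : Cardinal.{u} | ∃ (I : Type u) (P : I → Set Y), Cardinal.mk I = n ∧
    (∀ i, (P i).Nonempty) ∧ Pairwise (Function.onFun Disjoint P) ∧ (⋃ i, P i) = univ ∧
    ∃ ε > 0, ∀ i, Metric.diam (P i) ≤ Metric.diam (univ : Set Y) - ε}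

/-- The distance on `X ⊕ Y` where all cross distances equal `c`. -/
def crossDist {X Y : Type*} [MetricSpace X] [MetricSpace Y] (c : ℝ) : X ⊕ Y → X ⊕ Y → ℝ
  | .inl x, .inl x' => dist x x'
  | .inr y, .inr y' => dist y y'
  | _, _ => c

/-- A coupling metric on `X ⊕ Y` where cross distances equal `c`. -/
noncomputable def crossMetric {X Y : Type*} [MetricSpace X] [MetricSpace Y] (c : ℝ)
    (hc : 0 < c) (hX : ∀ x x' : X, dist x x' ≤ 2 * c) (hY : ∀ y y' : Y, dist y y' ≤ 2 * c) :
    MetricSpace (X ⊕ Y) where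
  dist := crossDist c
  dist_self p := by cases p <;> simp [crossDist]
  dist_comm p q := by cases p <;> cases q <;> simp [crossDist, dist_comm]
  dist_triangle p q r := by
    rcases p with x | y <;> rcases q with x' | y' <;> rcases r with x'' | y'' <;>
      simp only [crossDist]
    · exact dist_triangle _ _ _
    · linarith [dist_nonneg (x := x) (y := x')]
    · linarith [hX x x'']
    · linarith [dist_nonneg (x := y') (y := y'')]
    · linarith [dist_nonneg (x := x') (y := x'')]
    · linarith [hY y y'']
    · linarith [dist_nonneg (x := y) (y := y')]
    · exact dist_triangle _ _ _
  eq_of_dist_eq_zero {p q} h := by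
    rcases p with x | y <;> rcases q with x' | y' <;> simp only [crossDist] at h
    · rw [eq_of_dist_eq_zero h]
    · exact absurd h hc.ne'
    · exact absurd h hc.ne'
    · rw [eq_of_dist_eq_zero h]

/-- Let `X` and `Y` be nonempty compact metric spaces with `#X < β(Y)` and
`diam X ≤ diam Y`. Then `2·d_GH(X,Y) = diam Y`. -/
theorem two_ghDist_eq_diam_of_card_lt_borsukNumber
    (X : Type u) [MetricSpace X] [CompactSpace X] [Nonempty X]
    (Y : Type u) [MetricSpace Y] [CompactSpace Y] [Nonempty Y]
    (hcard : Cardinal.mk X < borsukNumber Y)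
    (hdiam : Metric.diam (univ : Set X) ≤ Metric.diam (univ : Set Y)) :
    2 * GromovHausdorff.ghDist X Y = Metric.diam (univ : Set Y) := by
  set D := Metric.diam (univ : Set Y) with hD
  -- First, `D > 0`, for otherwise the Borsuk number would be `0`.
  have hS : {n : Cardinal.{u} | ∃ (I : Type u) (P : I → Set Y), Cardinal.mk I = n ∧
      (∀ i, (P i).Nonempty) ∧ Pairwise (Function.onFun Disjoint P) ∧ (⋃ i, P i) = univ ∧
      ∃ ε > 0, ∀ i, Metric.diam (P i) ≤ Metric.diam (univ : Set Y) - ε}.Nonempty := by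
    by_contra h
    rw [Set.not_nonempty_iff_eq_empty] at h
    have : borsukNumber Y = 0 := by rw [borsukNumber, h, Cardinal.sInf_empty]
    rw [this] at hcard
    exact absurd hcard (Cardinal.zero_le _).not_gt
  have hD0 : 0 < D := by
    obtain ⟨n, I, P, -, hne, -, hun, ε, hε, hdi⟩ := hS
    have hIne : Nonempty I := by
      by_contra h
      rw [not_nonempty_iff] at h
      have : (⋃ i, P i) = (∅ : Set Y) := iUnion_of_empty P
      rw [hun] at this
      exact (univ_nonempty (α := Y)).ne_empty this
    obtain ⟨i⟩ := hIne
    have := (Metric.diam_nonneg (s := P i)).trans (hdi i)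
    linarith
  -- Upper bound: `2 * ghDist ≤ D` via the coupling with constant cross distance `D/2`.
  have hub : 2 * GromovHausdorff.ghDist X Y ≤ D := by
    have hX2 : ∀ x x' : X, dist x x' ≤ 2 * (D / 2) := fun x x' => by
      have : dist x x' ≤ Metric.diam (univ : Set X) :=
        Metric.dist_le_diam_of_mem (Metric.isBounded_of_compactSpace) (mem_univ _) (mem_univ _)
      linarith
    have hY2 : ∀ y y' : Y, dist y y' ≤ 2 * (D / 2) := fun y y' => by
      have : dist y y' ≤ D :=
        Metric.dist_le_diam_of_mem (Metric.isBounded_of_compactSpace) (mem_univ _) (mem_univ _)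
      linarith
    letI m : MetricSpace (X ⊕ Y) := crossMetric (D / 2) (by linarith) hX2 hY2
    have hl : Isometry (Sum.inl : X → X ⊕ Y) := Isometry.of_dist_eq fun _ _ => rfl
    have hr : Isometry (Sum.inr : Y → X ⊕ Y) := Isometry.of_dist_eq fun _ _ => rfl
    have key : GromovHausdorff.ghDist X Y ≤
        Metric.hausdorffDist (range (Sum.inl : X → X ⊕ Y)) (range (Sum.inr : Y → X ⊕ Y)) :=
      GromovHausdorff.ghDist_le_hausdorffDist hl hr
    have hH : Metric.hausdorffDist (range (Sum.inl : X → X ⊕ Y))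
        (range (Sum.inr : Y → X ⊕ Y)) ≤ D / 2 := by
      apply Metric.hausdorffDist_le_of_mem_dist (by linarith)
      · rintro _ ⟨x, rfl⟩
        obtain ⟨y⟩ := ‹Nonempty Y›
        exact ⟨Sum.inr y, mem_range_self _, le_of_eq rfl⟩
      · rintro _ ⟨y, rfl⟩
        obtain ⟨x⟩ := ‹Nonempty X›
        exact ⟨Sum.inl x, mem_range_self _, le_of_eq rfl⟩
    linarith
  -- Lower bound.
  have hlb : D ≤ 2 * GromovHausdorff.ghDist X Y := by
    by_contra h
    push_neg at h
    set r := GromovHausdorff.ghDist X Y with hr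
    obtain ⟨ρ, hrρ, hρD⟩ : ∃ ρ : ℝ, r < ρ ∧ 2 * ρ < D :=
      ⟨(2 * r + D) / 4, by linarith, by linarith⟩
    -- work in the optimal coupling
    set Φ := GromovHausdorff.optimalGHInjl X Y
    set Ψ := GromovHausdorff.optimalGHInjr X Y
    have hΦ : Isometry Φ := GromovHausdorff.isometry_optimalGHInjl X Y
    have hΨ : Isometry Ψ := GromovHausdorff.isometry_optimalGHInjr X Y
    have hopt : Metric.hausdorffDist (range Φ) (range Ψ) = r :=
      GromovHausdorff.hausdorffDist_optimal (X := X) (Y := Y)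
    have hρ0 : 0 ≤ ρ := le_trans (hopt ▸ Metric.hausdorffDist_nonneg) hrρ.le
    have hfin : EMetric.hausdorffEdist (range Φ) (range Ψ) ≠ ⊤ :=
      Metric.hausdorffEdist_ne_top_of_nonempty_of_bounded (range_nonempty _) (range_nonempty _)
        (isCompact_range hΦ.continuous).isBounded (isCompact_range hΨ.continuous).isBounded
    have hch : ∀ y : Y, ∃ x : X, dist (Ψ y) (Φ x) < ρ := by
      intro y
      have : Metric.hausdorffDist (range Φ) (range Ψ) < ρ := by rw [hopt]; exact hrρ
      obtain ⟨b, hb, hdb⟩ :=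
        Metric.exists_dist_lt_of_hausdorffDist_lt' (mem_range_self y) this hfin
      obtain ⟨x, rfl⟩ := hb
      exact ⟨x, by rwa [dist_comm]⟩
    choose f hf using hch
    -- partition of `Y` indexed by the range of `f`
    set I := {x : X // ∃ y : Y, f y = x} with hI
    have hmem : Cardinal.mk I ∈ {n : Cardinal.{u} | ∃ (I : Type u) (P : I → Set Y),
        Cardinal.mk I = n ∧ (∀ i, (P i).Nonempty) ∧ Pairwise (Function.onFun Disjoint P) ∧
        (⋃ i, P i) = univ ∧
        ∃ ε > 0, ∀ i, Metric.diam (P i) ≤ Metric.diam (univ : Set Y) - ε} := by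
      refine ⟨I, fun i => f ⁻¹' {i.1}, rfl, ?_, ?_, ?_, D - 2 * ρ, by linarith, ?_⟩
      · rintro ⟨x, y, rfl⟩
        exact ⟨y, rfl⟩
      · intro i j hij
        refine Set.disjoint_left.2 fun y hy hy' => hij ?_
        exact Subtype.ext (hy.symm.trans hy')
      · refine eq_univ_of_forall fun y => mem_iUnion.2 ⟨⟨f y, y, rfl⟩, rfl⟩
      · intro i
        have h2ρ : Metric.diam (f ⁻¹' {i.1}) ≤ 2 * ρ := by
          apply Metric.diam_le_of_forall_dist_le (by linarith)
          intro y hy y' hy'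
          have hy : f y = i.1 := hy
          have hy' : f y' = i.1 := hy'
          have : dist (Ψ y) (Ψ y') ≤ dist (Ψ y) (Φ i.1) + dist (Φ i.1) (Ψ y') :=
            dist_triangle _ _ _
          have h1 : dist (Ψ y) (Φ i.1) < ρ := by rw [← hy]; exact hf y
          have h2 : dist (Φ i.1) (Ψ y') < ρ := by rw [dist_comm, ← hy']; exact hf y'
          have := hΨ.dist_eq y y'
          calc dist y y' = dist (Ψ y) (Ψ y') := (hΨ.dist_eq y y').symm
            _ ≤ dist (Ψ y) (Φ i.1) + dist (Φ i.1) (Ψ y') := dist_triangle _ _ _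
            _ ≤ 2 * ρ := by linarith
        linarith
    have hle : borsukNumber Y ≤ Cardinal.mk I := csInf_le (OrderBot.bddBelow _) hmem
    have hle' : Cardinal.mk I ≤ Cardinal.mk X := Cardinal.mk_subtype_le _
    exact absurd hcard (by exact not_lt.2 (hle.trans hle'))
  linarith
end

section
/- Let X and Y be nonempty compact metric spaces with at least two points in Y. If every partition of Y into at most #X nonempty parts contains a part whose diameter equals diam Y (i.e., Y admits no partition of cardinality #X into subsets of strictly smaller diameter), and diam X ≤ diam Y, then d_GH(X, Y) ≥ (1/2)·diam Y. -/
open Set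

/-- Let `X` and `Y` be nonempty compact metric spaces, `Y` with at least two points, such
that every partition of `Y` into at most `#X` nonempty parts contains a part whose
diameter equals `diam Y`, and `diam X ≤ diam Y`. Then `d_GH(X,Y) ≥ (1/2)·diam Y`. -/
theorem ghDist_ge_half_diam_of_no_small_partition
    (X : Type u) [MetricSpace X] [CompactSpace X] [Nonempty X]
    (Y : Type u) [MetricSpace Y] [CompactSpace Y] [Nontrivial Y]
    (h : ∀ (I : Type u) (P : I → Set Y), Cardinal.mk I ≤ Cardinal.mk X →
      (∀ i, (P i).Nonempty) → Pairwise (Function.onFun Disjoint P) → (⋃ i, P i) = univ →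
      ∃ i, Metric.diam (P i) = Metric.diam (univ : Set Y))
    (hdiam : Metric.diam (univ : Set X) ≤ Metric.diam (univ : Set Y)) :
    1 / 2 * Metric.diam (univ : Set Y) ≤ GromovHausdorff.ghDist X Y := by
  by_contra hlt
  push_neg at hlt
  set D := Metric.diam (univ : Set Y) with hD
  have hDpos : 0 < D := by
    obtain ⟨y1, y2, hy⟩ := exists_pair_ne Y
    have h1 : dist y1 y2 ≤ D :=
      Metric.dist_le_diam_of_mem isCompact_univ.isBounded (mem_univ y1) (mem_univ y2)
    have h2 : 0 < dist y1 y2 := dist_pos.2 hy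
    linarith
  set Φ := GromovHausdorff.optimalGHInjl X Y with hΦ
  set Ψ := GromovHausdorff.optimalGHInjr X Y with hΨ
  have hΦi := GromovHausdorff.isometry_optimalGHInjl X Y
  have hΨi := GromovHausdorff.isometry_optimalGHInjr X Y
  have hH : Metric.hausdorffDist (range Φ) (range Ψ) = GromovHausdorff.ghDist X Y :=
    GromovHausdorff.hausdorffDist_optimal
  set r' : ℝ := (GromovHausdorff.ghDist X Y + D / 2) / 2 with hr'
  have hgh0 : 0 ≤ GromovHausdorff.ghDist X Y := le_trans (Metric.hausdorffDist_nonneg) hH.le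
  have hr'pos : 0 < r' := by positivity
  have hrr' : Metric.hausdorffDist (range Ψ) (range Φ) < r' := by
    rw [Metric.hausdorffDist_comm, hH]; linarith
  have h2r' : 2 * r' < D := by rw [hr']; linarith
  have hedist : EMetric.hausdorffEdist (range Ψ) (range Φ) ≠ ⊤ :=
    Metric.hausdorffEdist_ne_top_of_nonempty_of_bounded (range_nonempty _) (range_nonempty _)
      (isCompact_range hΨi.continuous).isBounded (isCompact_range hΦi.continuous).isBounded
  have hchoice : ∀ y : Y, ∃ x : X, dist (Ψ y) (Φ x) < r' := by
    intro y
    obtain ⟨z, hz, hdz⟩ := Metric.exists_dist_lt_of_hausdorffDist_lt (mem_range_self y) hrr' hedist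
    obtain ⟨x, rfl⟩ := hz
    exact ⟨x, hdz⟩
  choose f hf using hchoice
  set I := range f with hI
  set P : I → Set Y := fun i => f ⁻¹' {i.val} with hP
  obtain ⟨i, hi⟩ := h I P (Cardinal.mk_subtype_le _)
    (by
      rintro ⟨x, y, rfl⟩
      exact ⟨y, rfl⟩)
    (by
      rintro i j hij
      rw [Function.onFun, Set.disjoint_left]
      rintro y (hy1 : f y = i.val) (hy2 : f y = j.val)
      exact hij (Subtype.ext (hy1 ▸ hy2)))
    (by
      ext y
      simp only [mem_iUnion, mem_univ, iff_true]
      exact ⟨⟨f y, mem_range_self y⟩, rfl⟩)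
  have hle : Metric.diam (P i) ≤ 2 * r' := by
    apply Metric.diam_le_of_forall_dist_le (by positivity)
    rintro y (hy : f y = i.val) y' (hy' : f y' = i.val)
    have d1 : dist (Ψ y) (Φ i.val) < r' := hy ▸ hf y
    have d2 : dist (Ψ y') (Φ i.val) < r' := hy' ▸ hf y'
    calc dist y y' = dist (Ψ y) (Ψ y') := (hΨi.dist_eq y y').symm
      _ ≤ dist (Ψ y) (Φ i.val) + dist (Φ i.val) (Ψ y') := dist_triangle _ _ _
      _ ≤ r' + r' := by rw [dist_comm (Φ i.val)]; linarith
      _ = 2 * r' := by ring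
  rw [hi] at hle
  linarith
end

section
/- Let X be a normal topological space with a free continuous involution A : X → X, and let n be a positive integer. Then the following two statements are equivalent: (1) for every continuous map f : X → ℝⁿ there exists x ∈ X with f(A(x)) = f(x); (2) for every covering {C_1, …, C_{n+1}} of X by n+1 closed sets, there exists an index i and a point x ∈ X with both x ∈ C_i and A(x) ∈ C_i. -/
open Set

/-- Bacon's theorem: for a normal topological space `X` with a free continuous involution
`A : X → X` and a positive integer `n`, the following are equivalent:
(1) every continuous map `f : X → ℝⁿ` has a point `x` with `f(A(x)) = f(x)`;
(2) every covering of `X` by `n+1` closed sets has a member containing some `x` together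
with `A(x)`. -/
theorem bacon_equivalence
    (X : Type*) [TopologicalSpace X] [NormalSpace X]
    (A : X → X) (hA_cont : Continuous A) (hA_inv : Function.Involutive A)
    (hA_free : ∀ x : X, A x ≠ x) (n : ℕ) (hn : 0 < n) :
    (∀ f : X → EuclideanSpace ℝ (Fin n), Continuous f → ∃ x : X, f (A x) = f x) ↔
      (∀ C : Fin (n + 1) → Set X, (∀ i, IsClosed (C i)) → (⋃ i, C i) = univ →
        ∃ i, ∃ x : X, x ∈ C i ∧ A x ∈ C i) := by
  constructor
  · -- (1) → (2)
    intro h1 C hCcl hCcov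
    by_contra hcon
    push_neg at hcon
    have hdisj : ∀ i, Disjoint (C i) (A ⁻¹' C i) := by
      intro i
      rw [Set.disjoint_left]
      intro x hx hx'
      exact hcon i x hx hx'
    have hAcl : ∀ i, IsClosed (A ⁻¹' C i) := fun i => (hCcl i).preimage hA_cont
    choose u hu0 hu1 hu01 using fun k : Fin n =>
      exists_continuous_zero_one_of_isClosed (hCcl k.castSucc) (hAcl k.castSucc)
        (hdisj k.castSucc)
    set f : X → EuclideanSpace ℝ (Fin n) := fun x =>
      (EuclideanSpace.equiv (Fin n) ℝ).symm (fun k => u k x - u k (A x)) with hf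
    have hfc : Continuous f := by
      apply (EuclideanSpace.equiv (Fin n) ℝ).symm.continuous.comp
      exact continuous_pi fun k => ((u k).continuous).sub ((u k).continuous.comp hA_cont)
    obtain ⟨x, hx⟩ := h1 f hfc
    have hkey : ∀ k : Fin n, u k x = u k (A x) := by
      intro k
      have h := congrArg (fun v => v k) hx
      simp only [hf, EuclideanSpace.equiv, ContinuousLinearEquiv.symm_apply_apply] at h
      have h' : u k (A x) - u k (A (A x)) = u k x - u k (A x) := h
      rw [hA_inv x] at h'
      linarith
    have hnot : ∀ k : Fin n, x ∉ C k.castSucc ∧ A x ∉ C k.castSucc := by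
      intro k
      constructor
      · intro hxC
        have h0 : u k x = 0 := hu0 k hxC
        have h1' : u k (A x) = 1 := by
          have : A x ∈ A ⁻¹' C k.castSucc := by
            simp only [Set.mem_preimage, hA_inv x]; exact hxC
          exact hu1 k this
        rw [hkey k, h1'] at h0
        norm_num at h0
      · intro hxC
        have h0 : u k (A x) = 0 := hu0 k hxC
        have h1' : u k x = 1 := hu1 k hxC
        rw [← hkey k, h1'] at h0
        norm_num at h0
    have hlast : ∀ y : X, (∀ k : Fin n, y ∉ C k.castSucc) → y ∈ C (Fin.last n) := by
      intro y hy
      have : y ∈ ⋃ i, C i := hCcov ▸ Set.mem_univ y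
      obtain ⟨i, hi⟩ := Set.mem_iUnion.mp this
      rcases lt_or_ge (i : ℕ) n with h | h
      · exact absurd hi (by simpa using hy ⟨i, h⟩)
      · have : i = Fin.last n := Fin.ext (le_antisymm (Nat.lt_succ_iff.mp i.isLt) h)
        rwa [this] at hi
    have hxlast : x ∈ C (Fin.last n) := hlast x fun k => (hnot k).1
    have hAxlast : A x ∈ C (Fin.last n) := hlast (A x) fun k => (hnot k).2
    exact hcon (Fin.last n) x hxlast hAxlast
  · -- (2) → (1)
    intro h2 f hfc
    by_contra hcon
    push_neg at hcon
    set g : X → EuclideanSpace ℝ (Fin n) := fun x => f x - f (A x) with hg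
    have hgc : Continuous g := hfc.sub (hfc.comp hA_cont)
    have hgA : ∀ x, g (A x) = -g x := by
      intro x
      simp only [hg, hA_inv x, neg_sub]
    have hgne : ∀ x, g x ≠ 0 := by
      intro x hx0
      exact hcon x (sub_eq_zero.mp hx0).symm
    set φ : Fin (n + 1) → X → ℝ := fun i x =>
      if h : (i : ℕ) < n then g x ⟨i, h⟩ else -∑ k, g x k with hφ
    have hφc : ∀ i, Continuous (φ i) := by
      intro i
      by_cases h : (i : ℕ) < n
      · simp only [hφ, dif_pos h]
        exact ((EuclideanSpace.proj (𝕜 := ℝ) (⟨(i : ℕ), h⟩ : Fin n)).continuous).comp hgc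
      · simp only [hφ, dif_neg h]
        exact (continuous_finset_sum _ fun k _ =>
          ((EuclideanSpace.proj (𝕜 := ℝ) k).continuous).comp hgc).neg
    have hφA : ∀ i x, φ i (A x) = -(φ i x) := by
      intro i x
      by_cases h : (i : ℕ) < n
      · simp only [hφ, dif_pos h, hgA]
        rfl
      · simp only [hφ, dif_neg h, hgA, neg_neg]
        rw [← Finset.sum_neg_distrib]
        refine Finset.sum_congr rfl fun k _ => ?_
        show -((-g x) k) = g x k
        simp
    set C : Fin (n + 1) → Set X := fun i => {x | ∀ j, φ j x ≤ φ i x} with hC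
    have hCcl : ∀ i, IsClosed (C i) := by
      intro i
      have : C i = ⋂ j, {x | φ j x ≤ φ i x} := by
        ext y; simp [hC]
      rw [this]
      exact isClosed_iInter fun j => isClosed_le (hφc j) (hφc i)
    have hCcov : (⋃ i, C i) = univ := by
      ext y
      simp only [Set.mem_iUnion, Set.mem_univ, iff_true, hC, Set.mem_setOf_eq]
      exact Finite.exists_max fun i => φ i y
    obtain ⟨i, x, hx, hAx⟩ := h2 C hCcl hCcov
    have heq : ∀ j, φ j x = φ i x := by
      intro j
      refine le_antisymm (hx j) ?_
      have h := hAx j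
      rw [hφA, hφA] at h
      linarith
    have hsum : ∑ j, φ j x = 0 := by
      rw [Fin.sum_univ_castSucc]
      have h1 : ∀ k : Fin n, φ k.castSucc x = g x k := by
        intro k
        simp only [hφ, Fin.coe_castSucc, dif_pos k.isLt]
      have h2' : φ (Fin.last n) x = -∑ k, g x k := by
        simp only [hφ, Fin.val_last, dif_neg (lt_irrefl n)]
      simp only [h1, h2']
      ring
    have hsum' : ∑ j, φ j x = (n + 1 : ℕ) • φ i x := by
      rw [Finset.sum_congr rfl fun j _ => heq j, Finset.sum_const, Finset.card_univ,
        Fintype.card_fin]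
    have hφi0 : φ i x = 0 := by
      rw [hsum', nsmul_eq_mul] at hsum
      have hne : ((n + 1 : ℕ) : ℝ) ≠ 0 := by positivity
      exact (mul_eq_zero.mp hsum).resolve_left hne
    have hgx0 : g x = 0 := by
      ext k
      have := heq (Fin.castSucc k)
      rw [hφi0] at this
      simpa only [hφ, Fin.coe_castSucc, dif_pos k.isLt, WithLp.ofLp_zero, Pi.zero_apply] using this
    exact hgne x hgx0
end

section
/- Let n be a positive integer and Y a nonempty compact metric space with the following property: for every covering of Y by at most n closed sets, at least one of the sets contains two points x, x' with d(x,x') = diam Y (Y is a dLS_n-space). Let X be a finite metric space with #X ≤ n and diam X ≤ diam Y. Then 2·d_GH(X, Y) = diam Y. -/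
open Set Metric GromovHausdorff

section SumMetric
variable {X : Type*} {Y : Type*} [MetricSpace X] [MetricSpace Y]

/-- Distance on `X ⊕ Y` with cross distance `c`. -/
def sumCDist (c : ℝ) : X ⊕ Y → X ⊕ Y → ℝ
  | .inl x, .inl x' => dist x x'
  | .inl _, .inr _ => c
  | .inr _, .inl _ => c
  | .inr y, .inr y' => dist y y'

def sumCMetric (c : ℝ) (hc : 0 < c)
    (hX : ∀ x x' : X, dist x x' ≤ 2 * c) (hY : ∀ y y' : Y, dist y y' ≤ 2 * c) :
    MetricSpace (X ⊕ Y) where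
  dist := sumCDist c
  dist_self p := by cases p <;> simp [sumCDist]
  dist_comm p q := by cases p <;> cases q <;> simp [sumCDist, dist_comm]
  dist_triangle p q r := by
    rcases p with x | y <;> rcases q with x' | y' <;> rcases r with x'' | y'' <;>
      simp only [sumCDist] <;>
      first
        | exact dist_triangle _ _ _
        | exact le_add_of_nonneg_left dist_nonneg
        | exact le_add_of_nonneg_right dist_nonneg
        | (rw [← two_mul]; exact hX _ _)
        | (rw [← two_mul]; exact hY _ _)
  eq_of_dist_eq_zero {p q} h := by
    rcases p with x | y <;> rcases q with x' | y' <;> simp only [sumCDist] at h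
    · exact congrArg _ (eq_of_dist_eq_zero h)
    · exact absurd h hc.ne'
    · exact absurd h hc.ne'
    · exact congrArg _ (eq_of_dist_eq_zero h)

end SumMetric

/-- Let `n` be a positive integer and `Y` a nonempty compact metric space which is a
`dLS_n`-space: for every covering of `Y` by at most `n` closed sets, some member contains
two points `x, x'` with `d(x,x') = diam Y`. Let `X` be a finite metric space with
`#X ≤ n` and `diam X ≤ diam Y`. Then `2·d_GH(X,Y) = diam Y`. -/
theorem two_ghDist_eq_diam_of_dLS
    (n : ℕ) (hn : 0 < n)
    (Y : Type*) [MetricSpace Y] [CompactSpace Y] [Nonempty Y]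
    (hdLS : ∀ m : ℕ, m ≤ n → ∀ C : Fin m → Set Y, (∀ i, IsClosed (C i)) →
      (⋃ i, C i) = univ →
      ∃ i, ∃ x x' : Y, x ∈ C i ∧ x' ∈ C i ∧ dist x x' = Metric.diam (univ : Set Y))
    (X : Type*) [MetricSpace X] [Finite X] [Nonempty X]
    (hcard : Nat.card X ≤ n)
    (hdiam : Metric.diam (univ : Set X) ≤ Metric.diam (univ : Set Y)) :
    2 * GromovHausdorff.ghDist X Y = Metric.diam (univ : Set Y) := by
  classical
  set D := Metric.diam (univ : Set Y) with hD
  have hD0 : 0 ≤ D := Metric.diam_nonneg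
  haveI : CompactSpace X := Finite.compactSpace
  -- Lower bound: D ≤ 2 * ghDist X Y
  have lower : D ≤ 2 * GromovHausdorff.ghDist X Y := by
    set f := optimalGHInjl X Y
    set g := optimalGHInjr X Y
    have hf : Isometry f := isometry_optimalGHInjl X Y
    have hg : Isometry g := isometry_optimalGHInjr X Y
    set r := GromovHausdorff.ghDist X Y with hr
    have hopt : hausdorffDist (range f) (range g) = r := hausdorffDist_optimal
    have hcf : IsCompact (range f) := isCompact_range hf.continuous
    have hcg : IsCompact (range g) := isCompact_range hg.continuous
    have hne : (range f).Nonempty := range_nonempty f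
    have hfin : EMetric.hausdorffEdist (range f) (range g) ≠ ⊤ :=
      Metric.hausdorffEdist_ne_top_of_nonempty_of_bounded hne (range_nonempty g)
        hcf.isBounded hcg.isBounded
    set m := Nat.card X with hm
    set e := Finite.equivFin X with he
    set C : Fin m → Set Y := fun i => g ⁻¹' Metric.closedBall (f (e.symm i)) r with hC
    have hclosed : ∀ i, IsClosed (C i) := fun i =>
      Metric.isClosed_closedBall.preimage hg.continuous
    have hcov : (⋃ i, C i) = univ := by
      ext y
      simp only [mem_iUnion, mem_univ, iff_true]
      have h1 : infDist (g y) (range f) ≤ r := by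
        have := Metric.infDist_le_hausdorffDist_of_mem (x := g y) (mem_range_self y)
          (Metric.hausdorffEdist_ne_top_of_nonempty_of_bounded (range_nonempty g) hne
            hcg.isBounded hcf.isBounded)
        calc infDist (g y) (range f) ≤ hausdorffDist (range g) (range f) := this
          _ = hausdorffDist (range f) (range g) := Metric.hausdorffDist_comm
          _ = r := hopt
      obtain ⟨z, hz, hzd⟩ := hcf.exists_infDist_eq_dist hne (g y)
      obtain ⟨x, rfl⟩ := hz
      refine ⟨e x, ?_⟩
      simp only [C, mem_preimage, Metric.mem_closedBall, Equiv.symm_apply_apply]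
      rw [← hzd]
      exact h1
    obtain ⟨i, y, y', hy, hy', hdist⟩ := hdLS m hcard C hclosed hcov
    simp only [C, mem_preimage, Metric.mem_closedBall] at hy hy'
    have : D = dist (g y) (g y') := by rw [hg.dist_eq, hdist]
    have tri : dist (g y) (g y') ≤ dist (g y) (f (e.symm i)) + dist (f (e.symm i)) (g y') :=
      dist_triangle _ _ _
    rw [dist_comm (f (e.symm i))] at tri
    linarith
  -- Upper bound
  rcases eq_or_lt_of_le hD0 with hzero | hpos
  · -- D = 0 : both spaces are subsingletons
    have hsY : ∀ y y' : Y, y = y' := fun y y' => by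
      have h2 : dist y y' ≤ 0 := by
        calc dist y y' ≤ D :=
              Metric.dist_le_diam_of_mem isBounded_of_compactSpace (mem_univ y) (mem_univ y')
          _ = 0 := hzero.symm
      exact eq_of_dist_eq_zero (le_antisymm h2 dist_nonneg)
    have hsX : ∀ x x' : X, x = x' := fun x x' => by
      have h1 := Metric.dist_le_diam_of_mem isBounded_of_compactSpace (mem_univ x) (mem_univ x')
      have : dist x x' ≤ 0 := by
        calc dist x x' ≤ Metric.diam (univ : Set X) := h1
          _ ≤ D := hdiam
          _ = 0 := hzero.symm
      exact eq_of_dist_eq_zero (le_antisymm this dist_nonneg)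
    obtain ⟨x₀⟩ := (inferInstance : Nonempty X)
    obtain ⟨y₀⟩ := (inferInstance : Nonempty Y)
    have hiso : Nonempty (X ≃ᵢ Y) := by
      refine ⟨⟨⟨fun _ => y₀, fun _ => x₀, fun x => hsX _ _, fun y => hsY _ _⟩, ?_⟩⟩
      refine Isometry.of_dist_eq fun a b => ?_
      rw [hsX a b, hsY y₀ y₀]  -- both dists are self-dists? using a = b
      simp
    have : GromovHausdorff.ghDist X Y = 0 := by
      have := (GromovHausdorff.toGHSpace_eq_toGHSpace_iff_isometryEquiv).2 hiso
      simp only [GromovHausdorff.ghDist, this, dist_self]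
    rw [this, ← hzero]; ring
  · -- D > 0 : glue X and Y at distance D/2
    have hc : 0 < D / 2 := by linarith
    have hXle : ∀ x x' : X, dist x x' ≤ 2 * (D / 2) := fun x x' => by
      have := Metric.dist_le_diam_of_mem isBounded_of_compactSpace (mem_univ x) (mem_univ x')
      linarith
    have hYle : ∀ y y' : Y, dist y y' ≤ 2 * (D / 2) := fun y y' => by
      have := Metric.dist_le_diam_of_mem isBounded_of_compactSpace (mem_univ y) (mem_univ y')
      linarith
    letI M : MetricSpace (X ⊕ Y) := sumCMetric (D / 2) hc hXle hYle
    have hΦ : Isometry (Sum.inl : X → X ⊕ Y) := Isometry.of_dist_eq fun a b => rfl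
    have hΨ : Isometry (Sum.inr : Y → X ⊕ Y) := Isometry.of_dist_eq fun a b => rfl
    have hGH := GromovHausdorff.ghDist_le_hausdorffDist hΦ hΨ
    have hHd : hausdorffDist (range (Sum.inl : X → X ⊕ Y)) (range (Sum.inr : Y → X ⊕ Y)) ≤ D / 2 := by
      apply Metric.hausdorffDist_le_of_mem_dist hc.le
      · rintro _ ⟨x, rfl⟩
        obtain ⟨y₀⟩ := (inferInstance : Nonempty Y)
        exact ⟨Sum.inr y₀, mem_range_self _, le_of_eq rfl⟩
      · rintro _ ⟨y, rfl⟩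
        obtain ⟨x₀⟩ := (inferInstance : Nonempty X)
        exact ⟨Sum.inl x₀, mem_range_self _, le_of_eq rfl⟩
    have upper : GromovHausdorff.ghDist X Y ≤ D / 2 := le_trans hGH hHd
    linarith
end

section
/- Let X and Y be nonempty compact metric spaces with diam X ≤ diam Y. Assume that for some real λ with 0 < λ < diam Y and some finite cardinal m with #X < m ≤ #Y, one has 2·d_GH(λΔ_m, Y) = diam Y. Then 2·d_GH(X, Y) = diam Y. -/
open Set

/-- The metric space `λΔ_m`: `m` points, all nonzero distances equal to `lam > 0`. -/
noncomputable def scaledSimplex (lam : ℝ) (hlam : 0 < lam) (m : ℕ) : MetricSpace (Fin m) where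
  dist x y := if x = y then 0 else lam
  dist_self _ := if_pos rfl
  dist_comm x y := by simp [eq_comm]
  dist_triangle x y z := by (try dsimp only); split_ifs <;> simp_all <;> linarith
  eq_of_dist_eq_zero {x y} h := by by_contra hne; simp [hne] at h; linarith

/-- Gromov-Hausdorff distance is symmetric. -/
theorem ghDist_comm' (X : Type u) [MetricSpace X] [CompactSpace X] [Nonempty X]
    (Y : Type v) [MetricSpace Y] [CompactSpace Y] [Nonempty Y] :
    GromovHausdorff.ghDist X Y = GromovHausdorff.ghDist Y X := by
  unfold GromovHausdorff.ghDist
  exact dist_comm _ _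

/-- Upper bound: if `X` embeds into `Y` cardinality-wise and `diam X ≤ diam Y`, then
`2 d_GH(X,Y) ≤ diam Y`. -/
theorem two_ghDist_le_diam (X : Type u) [MetricSpace X] [CompactSpace X] [Nonempty X]
    (Y : Type v) [MetricSpace Y] [CompactSpace Y] [Nonempty Y]
    (hemb : Nonempty (X ↪ Y))
    (hdiam : Metric.diam (univ : Set X) ≤ Metric.diam (univ : Set Y)) :
    2 * GromovHausdorff.ghDist X Y ≤ Metric.diam (univ : Set Y) := by
  classical
  obtain ⟨emb⟩ := hemb
  set D := Metric.diam (univ : Set Y) with hD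
  have hD0 : 0 ≤ D := Metric.diam_nonneg
  have key : GromovHausdorff.ghDist Y X ≤ 0 + D / 2 + 0 := by
    apply GromovHausdorff.ghDist_le_of_approx_subsets
      (s := (univ : Set Y)) (Φ := fun z => Function.invFun emb z.1)
    · intro y; exact ⟨y, mem_univ y, by simp⟩
    · intro x
      obtain ⟨y, hy⟩ := Function.invFun_surjective emb.injective x
      exact ⟨⟨y, mem_univ y⟩, by simp [hy]⟩
    · intro z z'
      have h1 : dist (z : Y) (z' : Y) ≤ D := by
        rw [hD]
        exact Metric.dist_le_diam_of_mem isCompact_univ.isBounded (mem_univ _) (mem_univ _)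
      have h2 : dist (Function.invFun emb (z : Y)) (Function.invFun emb (z' : Y)) ≤ D := by
        refine le_trans ?_ hdiam
        exact Metric.dist_le_diam_of_mem isCompact_univ.isBounded (mem_univ _) (mem_univ _)
      have h3 : dist z z' = dist (z : Y) (z' : Y) := Subtype.dist_eq z z'
      rw [h3, abs_le]
      constructor <;> [linarith [dist_nonneg (x := (z:Y)) (y := (z':Y))];
        linarith [dist_nonneg (x := Function.invFun emb (z:Y)) (y := Function.invFun emb (z':Y))]]
  rw [ghDist_comm' X Y]
  linarith

universe u

/-- Let `X` and `Y` be nonempty compact metric spaces with `diam X ≤ diam Y`. If for some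
real `0 < λ < diam Y` and some finite cardinal `m` with `#X < m ≤ #Y` one has
`2·d_GH(λΔ_m, Y) = diam Y`, then `2·d_GH(X, Y) = diam Y`. -/
theorem two_ghDist_eq_diam_of_simplex
    (X : Type u) [MetricSpace X] [CompactSpace X] [Nonempty X]
    (Y : Type u) [MetricSpace Y] [CompactSpace Y] [Nonempty Y]
    (hdiam : Metric.diam (univ : Set X) ≤ Metric.diam (univ : Set Y))
    (lam : ℝ) (hlam0 : 0 < lam) (hlam1 : lam < Metric.diam (univ : Set Y))
    (m : ℕ) (hmX : Cardinal.mk X < (m : Cardinal.{u}))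
    (hmY : (m : Cardinal.{u}) ≤ Cardinal.mk Y)
    (hGH : 2 * (letI : MetricSpace (Fin m) := scaledSimplex lam hlam0 m
                haveI : Nonempty (Fin m) := Fin.pos_iff_nonempty.mp (by
                  rcases Nat.eq_zero_or_pos m with h0 | h0
                  · subst h0; exact absurd hmX (by simp)
                  · exact h0)
                GromovHausdorff.ghDist (Fin m) Y) = Metric.diam (univ : Set Y)) :
    2 * GromovHausdorff.ghDist X Y = Metric.diam (univ : Set Y) := by
  classical
  set D := Metric.diam (univ : Set Y) with hD
  -- upper bound
  have hembXY : Nonempty (X ↪ Y) := (Cardinal.le_def X Y).1 (hmX.le.trans hmY)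
  have hub : 2 * GromovHausdorff.ghDist X Y ≤ D := two_ghDist_le_diam X Y hembXY hdiam
  rcases eq_or_lt_of_le hub with heq | hlt
  · exact heq
  exfalso
  -- set up the simplex instance
  letI I : MetricSpace (Fin m) := scaledSimplex lam hlam0 m
  have hm0 : 0 < m := by
    rcases Nat.eq_zero_or_pos m with h0 | h0
    · subst h0; exact absurd hmX (by simp)
    · exact h0
  haveI : Nonempty (Fin m) := Fin.pos_iff_nonempty.mp hm0
  haveI : CompactSpace (Fin m) := by infer_instance
  have hGH' : 2 * GromovHausdorff.ghDist (Fin m) Y = D := hGH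
  -- the optimal coupling
  set r := GromovHausdorff.ghDist X Y with hr
  have hr0 : 0 ≤ r := by
    rw [hr]; unfold GromovHausdorff.ghDist; exact dist_nonneg
  set Φ := GromovHausdorff.optimalGHInjl X Y with hΦdef
  set Ψ := GromovHausdorff.optimalGHInjr X Y with hΨdef
  have hΦ : Isometry Φ := GromovHausdorff.isometry_optimalGHInjl X Y
  have hΨ : Isometry Ψ := GromovHausdorff.isometry_optimalGHInjr X Y
  have hne : EMetric.hausdorffEdist (range Ψ) (range Φ) ≠ ⊤ :=
    Metric.hausdorffEdist_ne_top_of_nonempty_of_bounded (range_nonempty _) (range_nonempty _)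
      (isCompact_range hΨ.continuous).isBounded (isCompact_range hΦ.continuous).isBounded
  have key : ∀ y : Y, ∃ x : X, dist (Ψ y) (Φ x) ≤ r := by
    intro y
    have h1 : Metric.infDist (Ψ y) (range Φ) ≤ r := by
      have h := Metric.infDist_le_hausdorffDist_of_mem (mem_range_self y) hne
      rwa [Metric.hausdorffDist_comm, GromovHausdorff.hausdorffDist_optimal, ← hr] at h
    obtain ⟨z, hz, hzd⟩ := (isCompact_range hΦ.continuous).exists_infDist_eq_dist
      (range_nonempty _) (Ψ y)
    obtain ⟨x, rfl⟩ := hz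
    exact ⟨x, by rw [← hzd]; exact h1⟩
  choose f hf using key
  have hfib : ∀ y y' : Y, f y = f y' → dist y y' ≤ 2 * r := by
    intro y y' h
    have h1 : dist y y' = dist (Ψ y) (Ψ y') := (hΨ.dist_eq y y').symm
    have h2 : dist (Ψ y) (Ψ y') ≤ dist (Ψ y) (Φ (f y')) + dist (Φ (f y')) (Ψ y') :=
      dist_triangle _ _ _
    have h3 : dist (Ψ y) (Φ (f y')) ≤ r := by rw [← h]; exact hf y
    have h4 : dist (Φ (f y')) (Ψ y') ≤ r := by rw [dist_comm]; exact hf y'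
    linarith
  -- finiteness of X
  have hfinX : Finite X := Cardinal.lt_aleph0_iff_finite.mp (hmX.trans (Cardinal.nat_lt_aleph0 m))
  haveI := Fintype.ofFinite X
  have hcard : Fintype.card X < m := by
    rwa [Cardinal.mk_fintype, Nat.cast_lt] at hmX
  -- an embedding of `Fin m` into `Y`
  obtain ⟨u⟩ : Nonempty (Fin m ↪ Y) := by
    rw [← Cardinal.lift_mk_le']
    simpa [Cardinal.mk_fin] using hmY
  -- section of f
  let σ : X → Y := fun x => if h : ∃ y, f y = x then h.choose else Classical.arbitrary Y
  have hσ : ∀ y : Y, f (σ (f y)) = f y := by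
    intro y
    have h : ∃ y', f y' = f y := ⟨y, rfl⟩
    simp only [σ, dif_pos h]
    exact h.choose_spec
  -- the finset B of size m containing all the section points
  let A : Finset Y := Finset.univ.image σ
  have hA : A.card ≤ Fintype.card X := le_trans Finset.card_image_le (by simp)
  let U : Finset Y := Finset.univ.image u
  have hU : U.card = m := by
    rw [Finset.card_image_of_injective _ u.injective]; simp
  have hsd : m - A.card ≤ (U \ A).card := by
    have h := Finset.le_card_sdiff A U
    omega
  obtain ⟨C, hCsub, hCcard⟩ := Finset.exists_subset_card_eq (s := U \ A) (n := m - A.card) hsd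
  have hdisj : Disjoint A C := (Finset.disjoint_sdiff (s := A) (t := U)).mono_right hCsub
  set B := A ∪ C with hBdef
  have hB : B.card = m := by
    rw [hBdef, Finset.card_union_of_disjoint hdisj, hCcard]
    omega
  let e : B ≃ Fin m := B.equivFinOfCardEq hB
  have hmemB : ∀ y : Y, σ (f y) ∈ B := fun y =>
    Finset.mem_union_left _ (Finset.mem_image.mpr ⟨f y, Finset.mem_univ _, rfl⟩)
  -- the map g : Y → Fin m
  let ρ : Y → B := fun y => if h : y ∈ B then ⟨y, h⟩ else ⟨σ (f y), hmemB y⟩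
  let g : Y → Fin m := fun y => e (ρ y)
  have hgsurj : ∀ i : Fin m, ∃ y : Y, g y = i := by
    intro i
    refine ⟨(e.symm i).1, ?_⟩
    have hmem := (e.symm i).2
    show e (ρ (e.symm i).1) = i
    have : ρ (e.symm i).1 = e.symm i := by
      simp only [ρ, dif_pos hmem]
    rw [this, e.apply_symm_apply]
  have hfρ : ∀ z : Y, f ((ρ z).1) = f z ∨ (ρ z).1 = z := by
    intro z
    by_cases h : z ∈ B
    · right; simp only [ρ, dif_pos h]
    · left; simp only [ρ, dif_neg h]; exact hσ z
  have hgfib : ∀ y y' : Y, g y = g y' → dist y y' ≤ 2 * r := by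
    intro y y' h
    have hval : (ρ y).1 = (ρ y').1 := congrArg Subtype.val (e.injective h)
    have hff : f y = f y' ∨ y = y' := by
      rcases hfρ y with hy | hy <;> rcases hfρ y' with hy' | hy'
      · left; rw [← hy, hval, hy']
      · left; rw [← hy, hval, hy']
      · left; rw [← hy']; rw [hy] at hval; rw [hval]
      · right; rw [← hy, ← hy', hval]
    rcases hff with hff | hff
    · exact hfib y y' hff
    · rw [hff, dist_self]; linarith
  -- bound the GH distance to the simplex
  set c := max lam (D - lam) with hc
  have happrox : GromovHausdorff.ghDist Y (Fin m) ≤ 0 + max (2 * r) c / 2 + 0 := by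
    apply GromovHausdorff.ghDist_le_of_approx_subsets
      (s := (univ : Set Y)) (Φ := fun z => g z.1)
    · intro y; exact ⟨y, mem_univ y, by simp⟩
    · intro i
      obtain ⟨y, hy⟩ := hgsurj i
      exact ⟨⟨y, mem_univ y⟩, by simp [hy]⟩
    · intro z z'
      have hzz : dist z z' = dist (z : Y) (z' : Y) := Subtype.dist_eq z z'
      have hd0 : (0:ℝ) ≤ dist (z : Y) (z' : Y) := dist_nonneg
      have hdD : dist (z : Y) (z' : Y) ≤ D := by
        rw [hD]
        exact Metric.dist_le_diam_of_mem isCompact_univ.isBounded (mem_univ _) (mem_univ _)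
      by_cases h : g z.1 = g z'.1
      · have h1 : dist (g z.1) (g z'.1) = 0 := by rw [h, dist_self]
        have h2 := hgfib z.1 z'.1 h
        rw [hzz, h1, sub_zero, abs_of_nonneg hd0]
        exact le_trans h2 (le_max_left _ _)
      · have h1 : dist (g z.1) (g z'.1) = lam := by
          show (if g z.1 = g z'.1 then (0:ℝ) else lam) = lam
          rw [if_neg h]
        rw [hzz, h1, abs_le]
        have hcl : lam ≤ max (2*r) c := le_trans (le_max_left _ _) (le_max_right _ _)
        have hcr : D - lam ≤ max (2*r) c := le_trans (le_max_right _ _) (le_max_right _ _)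
        constructor <;> linarith
  have hcD : c < D := by
    rw [hc]
    exact max_lt hlam1 (by linarith)
  have hmaxD : max (2 * r) c < D := max_lt hlt hcD
  have hfin : 2 * GromovHausdorff.ghDist (Fin m) Y < D := by
    calc 2 * GromovHausdorff.ghDist (Fin m) Y
        = 2 * GromovHausdorff.ghDist Y (Fin m) := by rw [ghDist_comm']
      _ ≤ max (2 * r) c := by linarith
      _ < D := hmaxD
  exact absurd hGH' (ne_of_lt hfin)
end
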